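/- arXiv:2106.12500 — 8 statements merged into one kernel-verified Lean document; each statement's English description precedes it below -/
import Mathlib

section
/- The map u ↦ i_u is an injective group homomorphism from Ω into the group of units of H(G,I) (in particular i_u ⋆ i_{u'} = i_{uu'} and every i_u is invertible), and for every w ∈ W̃ and u ∈ Ω one has i_w ⋆ i_u = i_u ⋆ i_{u⁻¹wu}. -/
open scoped Pointwise

/-! ## Setting

`G` is a group with subgroups `I` and `N` such that `T := I ⊓ N` is normal in `N`, and
`W̃ := N/T` is presented via a surjective homomorphism `π : N →* W̃` whose kernel consists of
the elements of `N` lying in `I`.  `W̃ = W_aff ⋊ Ω` is an internal semidirect product, where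
`W_aff` carries a Coxeter system `cs` (with simple reflections indexed by `B`), the length
function `ℓ` of `cs` is extended to `W̃` by `ℓ (w * u) = ℓ w` for `w ∈ W_aff`, `u ∈ Ω`, and
the axioms (T0), (T3), (T4), (TΩ), (TS), (TF) hold. -/

/-- The double coset `I·n·I ⊆ G` attached to an element `w ∈ W̃ = N/T`, described as the union
of `I·n·I` over all representatives `n ∈ N` of `w` (these double cosets all coincide, since any
two representatives differ by an element of `T = I ⊓ N ⊆ I`). -/
def IwI {G : Type} [Group G] {W : Type} [Group W] (I : Subgroup G) {N : Subgroup G}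
    (π : N →* W) (w : W) : Set G :=
  {g : G | ∃ n : N, π n = w ∧ ∃ i ∈ I, ∃ j ∈ I, g = i * (n : G) * j}

/-- The basis element `i_w = 1_{IwI} : G → ℤ` of the Iwahori–Hecke ring. -/
noncomputable def iw {G : Type} [Group G] {W : Type} [Group W] (I : Subgroup G) {N : Subgroup G}
    (π : N →* W) (w : W) : G → ℤ :=
  (IwI I π w).indicator fun _ => (1 : ℤ)

/-- Convolution of `ℤ`-valued functions on `G` relative to `I`:
`(f ⋆ f')(x) = Σ_{yI ∈ G/I} f(y)·f'(y⁻¹x)` (the value of `f` at a left coset `yI` is computed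
at a chosen representative; this is independent of the choices when `f` is right `I`-invariant
and `f'` is left `I`-invariant). -/
noncomputable def hconv {G : Type} [Group G] (I : Subgroup G) (f f' : G → ℤ) : G → ℤ :=
  fun x => ∑ᶠ y : G ⧸ I, f (Quotient.out y) * f' ((Quotient.out y)⁻¹ * x)

/-- The left cosets of `I` contained in a (right `I`-stable) subset `A ⊆ G`, viewed as the
image of `A` in `G/I`. -/
def leftCosetsIn {G : Type} [Group G] (I : Subgroup G) (A : Set G) : Set (G ⧸ I) :=
  QuotientGroup.mk '' A

/-- A function `f : G → ℤ` belongs to the Iwahori–Hecke ring `H(G,I)` iff it is left and right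
`I`-invariant and vanishes outside finitely many double cosets of `I`. -/
def IsHeckeElt {G : Type} [Group G] {W : Type} [Group W] (I : Subgroup G) {N : Subgroup G}
    (π : N →* W) (f : G → ℤ) : Prop :=
  (∀ i ∈ I, ∀ g : G, f (i * g) = f g) ∧ (∀ i ∈ I, ∀ g : G, f (g * i) = f g) ∧
    {w : W | ∃ g ∈ IwI I π w, f g ≠ 0}.Finite

/-- The data and axioms of the Iwahori–Matsumoto setting. -/
structure IwahoriHeckeSetup (G W B : Type) [Group G] [Group W] (M : CoxeterMatrix B) where
  /-- the "Iwahori" subgroup -/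
  I : Subgroup G
  /-- the subgroup `N` -/
  N : Subgroup G
  /-- the quotient map `N → W̃ = N/T`, `T = I ∩ N` -/
  π : N →* W
  π_surjective : Function.Surjective π
  /-- the kernel of `π` is exactly `T = I ∩ N` (so `T` is normal in `N` and `W̃ = N/T`) -/
  π_ker : ∀ n : N, π n = 1 ↔ (n : G) ∈ I
  /-- the normal subgroup `W_aff` of `W̃` -/
  Waff : Subgroup W
  /-- the subgroup `Ω` of `W̃` -/
  Om : Subgroup W
  Waff_normal : Waff.Normal
  /-- `W̃ = W_aff · Ω` -/
  sd_prod : ∀ w : W, ∃ wa ∈ Waff, ∃ u ∈ Om, w = wa * u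
  /-- `W_aff ∩ Ω = 1` -/
  sd_disj : Waff ⊓ Om = ⊥
  /-- the Coxeter system `(W_aff, S)`, `S = {simple b | b : B}` -/
  cs : CoxeterSystem M Waff
  /-- the length function of `(W_aff, S)`, extended to `W̃` -/
  len : W → ℕ
  len_spec : ∀ (wa : Waff) (u : Om), len ((wa : W) * (u : W)) = cs.length wa
  /-- `q w` = the number of left cosets of `I` contained in `IwI` -/
  q : W → ℕ
  /-- (T0): `G` is covered by the double cosets `IwI`, `w ∈ W̃` ... -/
  T0_cover : ∀ g : G, ∃ w : W, g ∈ IwI I π w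
  /-- (T0): ... and distinct double cosets are disjoint -/
  T0_disjoint : ∀ w w' : W, w ≠ w' → Disjoint (IwI I π w) (IwI I π w')
  /-- (T3): `sIw ⊆ IwI ∪ IswI` for all `s ∈ S`, `w ∈ W̃` -/
  T3 : ∀ (b : B) (w : W) (ns nw : N), π ns = (cs.simple b : W) → π nw = w →
      ∀ i ∈ I, (ns : G) * i * (nw : G) ∈ IwI I π w ∪ IwI I π ((cs.simple b : W) * w)
  /-- (T4): `sIs ⊄ I` for all `s ∈ S` -/
  T4 : ∀ (b : B) (ns ns' : N), π ns = (cs.simple b : W) → π ns' = (cs.simple b : W) →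
      ¬ (∀ i ∈ I, (ns : G) * i * (ns' : G) ∈ I)
  /-- (TΩ): representatives in `N` of elements of `Ω` normalize `I` -/
  TOm : ∀ n : N, π n ∈ Om → ∀ i ∈ I, (n : G) * i * (n : G)⁻¹ ∈ I
  /-- (TS): `uSu⁻¹ = S` for all `u ∈ Ω` -/
  TS : ∀ u ∈ Om, ∀ b : B, ∃ b' : B, u * (cs.simple b : W) * u⁻¹ = (cs.simple b' : W)
  /-- (TF): every double coset `IwI` is a finite union of left cosets of `I`, and `q w` is
  their number -/
  TF : ∀ w : W, (leftCosetsIn I (IwI I π w)).Finite ∧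
      q w = (leftCosetsIn I (IwI I π w)).ncard

section Aux

variable {G W B : Type} [Group G] [Group W] {M : CoxeterMatrix B}
  (D : IwahoriHeckeSetup G W B M)

/-- `IwI 1 = I`. -/
lemma IwI_one' : IwI D.I D.π 1 = (D.I : Set G) := by
  ext g
  constructor
  · rintro ⟨n, hn, i, hi, j, hj, rfl⟩
    exact mul_mem (mul_mem hi ((D.π_ker n).1 hn)) hj
  · intro hg
    exact ⟨1, map_one _, g, hg, 1, one_mem _, by simp⟩

/-- `IwI` is stable under right multiplication by `I`. -/
lemma IwI_mul_right_mem {w : W} {g : G} (hg : g ∈ IwI D.I D.π w) {j : G} (hj : j ∈ D.I) :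
    g * j ∈ IwI D.I D.π w := by
  obtain ⟨n, hn, i, hi, k, hk, rfl⟩ := hg
  exact ⟨n, hn, i, hi, k * j, mul_mem hk hj, by group⟩

/-- `IwI` is stable under left multiplication by `I`. -/
lemma IwI_mul_left_mem {w : W} {g : G} (hg : g ∈ IwI D.I D.π w) {i : G} (hi : i ∈ D.I) :
    i * g ∈ IwI D.I D.π w := by
  obtain ⟨n, hn, i', hi', k, hk, rfl⟩ := hg
  exact ⟨n, hn, i * i', mul_mem hi hi', k, hk, by group⟩

/-- key equivalence: for `u ∈ Ω` with representative `n`,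
`x ∈ IwI (w*u) ↔ x * n⁻¹ ∈ IwI w`. -/
lemma IwI_mul_rep {u : W} (hu : u ∈ D.Om) {n : D.N} (hn : D.π n = u) (w : W) (x : G) :
    x ∈ IwI D.I D.π (w * u) ↔ x * (n : G)⁻¹ ∈ IwI D.I D.π w := by
  constructor
  · rintro ⟨m, hm, i, hi, j, hj, rfl⟩
    refine ⟨m * n⁻¹, by rw [map_mul, map_inv, hm, hn]; group, i, hi,
      (n : G) * j * (n : G)⁻¹, D.TOm n (hn ▸ hu) j hj, ?_⟩
    push_cast
    group
  · rintro h
    obtain ⟨m, hm, i, hi, j, hj, hx⟩ := h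
    have hx' : x = i * ((m * n : D.N) : G) * ((n : G)⁻¹ * j * (n : G)) := by
      have : x = i * (m : G) * j * (n : G) := by
        rw [← hx]; group
      rw [this]; push_cast; group
    refine ⟨m * n, by rw [map_mul, hm, hn], i, hi, (n : G)⁻¹ * j * (n : G), ?_, hx'⟩
    have := D.TOm n⁻¹ (by rw [map_inv, hn]; exact inv_mem hu) j hj
    simpa using this

/-- key equivalence (left version): for `u ∈ Ω` with representative `n`,
`x ∈ IwI (u*w) ↔ n⁻¹ * x ∈ IwI w`. -/
lemma IwI_rep_mul {u : W} (hu : u ∈ D.Om) {n : D.N} (hn : D.π n = u) (w : W) (x : G) :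
    x ∈ IwI D.I D.π (u * w) ↔ (n : G)⁻¹ * x ∈ IwI D.I D.π w := by
  constructor
  · rintro ⟨m, hm, i, hi, j, hj, rfl⟩
    refine ⟨n⁻¹ * m, by rw [map_mul, map_inv, hm, hn]; group,
      (n : G)⁻¹ * i * (n : G), ?_, j, hj, ?_⟩
    · have := D.TOm n⁻¹ (by rw [map_inv, hn]; exact inv_mem hu) i hi
      simpa using this
    · push_cast
      group
  · rintro h
    obtain ⟨m, hm, i, hi, j, hj, hx⟩ := h
    have hx' : x = ((n : G) * i * (n : G)⁻¹) * ((n * m : D.N) : G) * j := by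
      have : x = (n : G) * (i * (m : G) * j) := by
        rw [← hx]; group
      rw [this]; push_cast; group
    exact ⟨n * m, by rw [map_mul, hm, hn], (n : G) * i * (n : G)⁻¹,
      D.TOm n (hn ▸ hu) i hi, j, hj, hx'⟩

/-- membership in `IwI u` for `u ∈ Ω`: `x ∈ IwI u ↔ x * n⁻¹ ∈ I`. -/
lemma mem_IwI_om {u : W} (hu : u ∈ D.Om) {n : D.N} (hn : D.π n = u) (x : G) :
    x ∈ IwI D.I D.π u ↔ x * (n : G)⁻¹ ∈ D.I := by
  have := IwI_mul_rep D hu hn 1 x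
  rw [one_mul, IwI_one'] at this
  exact this

/-- membership in `IwI u` for `u ∈ Ω`, left form: `x ∈ IwI u ↔ n⁻¹ * x ∈ I`. -/
lemma mem_IwI_om' {u : W} (hu : u ∈ D.Om) {n : D.N} (hn : D.π n = u) (x : G) :
    x ∈ IwI D.I D.π u ↔ (n : G)⁻¹ * x ∈ D.I := by
  have := IwI_rep_mul D hu hn 1 x
  rw [mul_one, IwI_one'] at this
  exact this

lemma iw_apply_mem {w : W} {g : G} (hg : g ∈ IwI D.I D.π w) : iw D.I D.π w g = 1 :=
  Set.indicator_of_mem hg _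

lemma iw_apply_notMem {w : W} {g : G} (hg : g ∉ IwI D.I D.π w) : iw D.I D.π w g = 0 :=
  Set.indicator_of_notMem hg _

/-- The main computation: for `u ∈ Ω`, `i_w ⋆ i_u = i_{wu}`. -/
lemma hconv_iw_om (w : W) {u : W} (hu : u ∈ D.Om) :
    hconv D.I (iw D.I D.π w) (iw D.I D.π u) = iw D.I D.π (w * u) := by
  obtain ⟨n, hn⟩ := D.π_surjective u
  funext x
  set y₀ : G ⧸ D.I := QuotientGroup.mk (x * (n : G)⁻¹) with hy₀
  have key : ∀ y : G ⧸ D.I,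
      (Quotient.out y)⁻¹ * x ∈ IwI D.I D.π u ↔ y = y₀ := by
    intro y
    rw [mem_IwI_om D hu hn, mul_assoc]
    constructor
    · intro h
      rw [← QuotientGroup.out_eq' y, hy₀]
      exact QuotientGroup.eq.2 h
    · intro h
      have : (QuotientGroup.mk (Quotient.out y) : G ⧸ D.I) =
          QuotientGroup.mk (x * (n : G)⁻¹) := by
        rw [QuotientGroup.out_eq' y, h]
      exact QuotientGroup.eq.1 this
  have hsum : hconv D.I (iw D.I D.π w) (iw D.I D.π u) x =
      iw D.I D.π w (Quotient.out y₀) * iw D.I D.π u ((Quotient.out y₀)⁻¹ * x) := by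
    refine finsum_eq_single _ y₀ ?_
    intro y hy
    rw [iw_apply_notMem D (fun h => hy ((key y).1 h)), mul_zero]
  rw [hconv] at hsum ⊢
  rw [hsum, iw_apply_mem D ((key y₀).2 rfl), mul_one]
  -- now `out y₀ = (x * n⁻¹) * i` for some `i ∈ I`
  have hmem : (x * (n : G)⁻¹)⁻¹ * Quotient.out y₀ ∈ D.I := by
    refine QuotientGroup.eq.1 ?_
    rw [QuotientGroup.out_eq' y₀]
  have hiff : Quotient.out y₀ ∈ IwI D.I D.π w ↔ x ∈ IwI D.I D.π (w * u) := by
    rw [IwI_mul_rep D hu hn]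
    constructor
    · intro h
      have hx2 : x * (n : G)⁻¹ =
          Quotient.out y₀ * ((x * (n : G)⁻¹)⁻¹ * Quotient.out y₀)⁻¹ := by group
      rw [hx2]
      exact IwI_mul_right_mem D h (inv_mem hmem)
    · intro h
      have hout : Quotient.out y₀ =
          (x * (n : G)⁻¹) * ((x * (n : G)⁻¹)⁻¹ * Quotient.out y₀) := by group
      rw [hout]
      exact IwI_mul_right_mem D h hmem
  by_cases hx : x ∈ IwI D.I D.π (w * u)
  · rw [iw_apply_mem D (hiff.2 hx), iw_apply_mem D hx]
  · rw [iw_apply_notMem D (fun h => hx (hiff.1 h)), iw_apply_notMem D hx]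

/-- The left version: for `u ∈ Ω`, `i_u ⋆ i_w = i_{uw}`. -/
lemma hconv_om_iw {u : W} (hu : u ∈ D.Om) (w : W) :
    hconv D.I (iw D.I D.π u) (iw D.I D.π w) = iw D.I D.π (u * w) := by
  obtain ⟨n, hn⟩ := D.π_surjective u
  funext x
  set y₀ : G ⧸ D.I := QuotientGroup.mk ((n : G)) with hy₀
  have key : ∀ y : G ⧸ D.I, Quotient.out y ∈ IwI D.I D.π u ↔ y = y₀ := by
    intro y
    rw [mem_IwI_om' D hu hn]
    constructor
    · intro h
      rw [← QuotientGroup.out_eq' y, hy₀]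
      exact (QuotientGroup.eq.2 h).symm
    · intro h
      have : (QuotientGroup.mk ((n : G)) : G ⧸ D.I) =
          QuotientGroup.mk (Quotient.out y) := by
        rw [QuotientGroup.out_eq' y, h]
      exact QuotientGroup.eq.1 this
  have hsum : hconv D.I (iw D.I D.π u) (iw D.I D.π w) x =
      iw D.I D.π u (Quotient.out y₀) * iw D.I D.π w ((Quotient.out y₀)⁻¹ * x) := by
    refine finsum_eq_single _ y₀ ?_
    intro y hy
    rw [iw_apply_notMem D (fun h => hy ((key y).1 h)), zero_mul]
  rw [hconv] at hsum ⊢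
  rw [hsum, iw_apply_mem D ((key y₀).2 rfl), one_mul]
  have hmem : (n : G)⁻¹ * Quotient.out y₀ ∈ D.I := by
    refine QuotientGroup.eq.1 ?_
    rw [QuotientGroup.out_eq' y₀]
  have hiff : (Quotient.out y₀)⁻¹ * x ∈ IwI D.I D.π w ↔ x ∈ IwI D.I D.π (u * w) := by
    rw [IwI_rep_mul D hu hn]
    constructor
    · intro h
      have hx2 : (n : G)⁻¹ * x =
          ((n : G)⁻¹ * Quotient.out y₀) * ((Quotient.out y₀)⁻¹ * x) := by group
      rw [hx2]
      exact IwI_mul_left_mem D h hmem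
    · intro h
      have hx2 : (Quotient.out y₀)⁻¹ * x =
          ((n : G)⁻¹ * Quotient.out y₀)⁻¹ * ((n : G)⁻¹ * x) := by group
      rw [hx2]
      exact IwI_mul_left_mem D h (inv_mem hmem)
  by_cases hx : x ∈ IwI D.I D.π (u * w)
  · rw [iw_apply_mem D (hiff.2 hx), iw_apply_mem D hx]
  · rw [iw_apply_notMem D (fun h => hx (hiff.1 h)), iw_apply_notMem D hx]

end Aux

/-- The map `u ↦ i_u` is an injective group homomorphism from `Ω` into the group of units of
`H(G,I)`: `i_u ⋆ i_{u'} = i_{uu'}`, `u ↦ i_u` is injective on `Ω`, every `i_u` (`u ∈ Ω`) has a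
two-sided inverse in `H(G,I)` (with unit `i_1`); moreover `i_w ⋆ i_u = i_u ⋆ i_{u⁻¹wu}` for
every `w ∈ W̃` and `u ∈ Ω`. -/
theorem omega_units {G W B : Type} [Group G] [Group W]
    {M : CoxeterMatrix B} (D : IwahoriHeckeSetup G W B M) :
    (∀ u ∈ D.Om, ∀ u' ∈ D.Om,
        hconv D.I (iw D.I D.π u) (iw D.I D.π u') = iw D.I D.π (u * u')) ∧
    (∀ u ∈ D.Om, ∀ u' ∈ D.Om, iw D.I D.π u = iw D.I D.π u' → u = u') ∧
    (∀ u ∈ D.Om, ∃ f : G → ℤ, IsHeckeElt D.I D.π f ∧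
        hconv D.I (iw D.I D.π u) f = iw D.I D.π 1 ∧
        hconv D.I f (iw D.I D.π u) = iw D.I D.π 1) ∧
    (∀ w : W, ∀ u ∈ D.Om,
        hconv D.I (iw D.I D.π w) (iw D.I D.π u) =
          hconv D.I (iw D.I D.π u) (iw D.I D.π (u⁻¹ * w * u))) := by
  refine ⟨fun u hu u' hu' => hconv_iw_om D u hu', ?_, ?_, ?_⟩
  · intro u hu u' hu' h
    by_contra hne
    obtain ⟨n, hn⟩ := D.π_surjective u
    have hmem : (n : G) ∈ IwI D.I D.π u := ⟨n, hn, 1, one_mem _, 1, one_mem _, by group⟩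
    have h1 : iw D.I D.π u (n : G) = 1 := iw_apply_mem D hmem
    have h2 : iw D.I D.π u' (n : G) = 1 := by rw [← h]; exact h1
    have hmem' : (n : G) ∈ IwI D.I D.π u' := by
      by_contra hc
      rw [iw_apply_notMem D hc] at h2
      exact one_ne_zero h2.symm
    exact (Set.disjoint_left.1 (D.T0_disjoint u u' hne) hmem) hmem'
  · intro u hu
    refine ⟨iw D.I D.π u⁻¹, ⟨?_, ?_, ?_⟩, ?_, ?_⟩
    · intro i hi g
      by_cases hg : g ∈ IwI D.I D.π u⁻¹
      · rw [iw_apply_mem D (IwI_mul_left_mem D hg hi), iw_apply_mem D hg]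
      · rw [iw_apply_notMem D hg, iw_apply_notMem D (fun h => hg ?_)]
        have := IwI_mul_left_mem D h (inv_mem hi)
        rwa [← mul_assoc, inv_mul_cancel, one_mul] at this
    · intro i hi g
      by_cases hg : g ∈ IwI D.I D.π u⁻¹
      · rw [iw_apply_mem D (IwI_mul_right_mem D hg hi), iw_apply_mem D hg]
      · rw [iw_apply_notMem D hg, iw_apply_notMem D (fun h => hg ?_)]
        have := IwI_mul_right_mem D h (inv_mem hi)
        rwa [mul_assoc, mul_inv_cancel, mul_one] at this
    · refine Set.Finite.subset (Set.finite_singleton u⁻¹) ?_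
      rintro w ⟨g, hg, hne⟩
      have hg' : g ∈ IwI D.I D.π u⁻¹ := by
        by_contra hc
        exact hne (iw_apply_notMem D hc)
      by_contra hw
      exact (Set.disjoint_left.1 (D.T0_disjoint w u⁻¹ hw) hg) hg'
    · rw [hconv_iw_om D u (inv_mem hu), mul_inv_cancel]
    · rw [hconv_iw_om D u⁻¹ hu, inv_mul_cancel]
  · intro w u hu
    rw [hconv_iw_om D w hu, hconv_om_iw D hu (u⁻¹ * w * u)]
    group
end

section
/- For w ∈ W̃ with reduced decomposition w = s₁⋯s_r·u (s_i ∈ S, u ∈ Ω, r = ℓ(w)), put i_w^* := i_{u⁻¹} ⋆ (i_{s_r} + (1 − q_{s_r})·i_1) ⋆ ⋯ ⋆ (i_{s_1} + (1 − q_{s_1})·i_1) ∈ H(G,I). Then i_w ⋆ i_w^* = i_w^* ⋆ i_w = q_w·i_1. -/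
open scoped Pointwise

/-! ### Auxiliary development -/

namespace IHAux

variable {G W B : Type} [Group G] [Group W] {M : CoxeterMatrix B}

section SetLevel

variable (D : IwahoriHeckeSetup G W B M)

lemma mem_IwI {w : W} (n : D.N) (hn : D.π n = w) {i j : G} (hi : i ∈ D.I) (hj : j ∈ D.I) :
    i * (n : G) * j ∈ IwI D.I D.π w :=
  ⟨n, hn, i, hi, j, hj, rfl⟩

lemma self_mem_IwI (n : D.N) : (n : G) ∈ IwI D.I D.π (D.π n) := by
  simpa using mem_IwI D n rfl D.I.one_mem D.I.one_mem

lemma IwI_rep {w : W} (n : D.N) (hn : D.π n = w) {g : G} (hg : g ∈ IwI D.I D.π w) :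
    ∃ i ∈ D.I, ∃ j ∈ D.I, g = i * (n : G) * j := by
  obtain ⟨m, hm, i, hi, j, hj, rfl⟩ := hg
  have h1 : D.π (n⁻¹ * m) = 1 := by rw [map_mul, map_inv, hn, hm, inv_mul_cancel]
  have h2 : ((n⁻¹ * m : D.N) : G) ∈ D.I := (D.π_ker _).mp h1
  refine ⟨i, hi, ((n⁻¹ * m : D.N) : G) * j, D.I.mul_mem h2 hj, ?_⟩
  push_cast
  group

lemma mul_mem_IwI_left {w : W} {i g : G} (hi : i ∈ D.I) (hg : g ∈ IwI D.I D.π w) :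
    i * g ∈ IwI D.I D.π w := by
  obtain ⟨m, hm, a, ha, c, hc, rfl⟩ := hg
  exact ⟨m, hm, i * a, D.I.mul_mem hi ha, c, hc, by group⟩

lemma mul_mem_IwI_right {w : W} {j g : G} (hj : j ∈ D.I) (hg : g ∈ IwI D.I D.π w) :
    g * j ∈ IwI D.I D.π w := by
  obtain ⟨m, hm, a, ha, c, hc, rfl⟩ := hg
  exact ⟨m, hm, a, ha, c * j, D.I.mul_mem hc hj, by group⟩

lemma IwI_one : IwI D.I D.π (1 : W) = (D.I : Set G) := by
  ext g
  constructor
  · rintro ⟨n, hn, i, hi, j, hj, rfl⟩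
    exact D.I.mul_mem (D.I.mul_mem hi ((D.π_ker n).mp hn)) hj
  · intro hg
    have : g = g * ((1 : D.N) : G) * 1 := by simp
    exact this ▸ mem_IwI D 1 (map_one _) hg D.I.one_mem

lemma inv_mem_IwI {w : W} {g : G} (hg : g ∈ IwI D.I D.π w) : g⁻¹ ∈ IwI D.I D.π w⁻¹ := by
  obtain ⟨n, hn, i, hi, j, hj, rfl⟩ := hg
  refine ⟨n⁻¹, by rw [map_inv, hn], j⁻¹, D.I.inv_mem hj, i⁻¹, D.I.inv_mem hi, ?_⟩
  push_cast
  group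

lemma eq_of_mem_IwI {w w' : W} {g : G} (h : g ∈ IwI D.I D.π w) (h' : g ∈ IwI D.I D.π w') :
    w = w' := by
  by_contra hne
  exact Set.disjoint_left.mp (D.T0_disjoint w w' hne) h h'

lemma mem_doubleCoset {w : W} {a x : G} (ha : a ∈ IwI D.I D.π w) (hx : x ∈ IwI D.I D.π w) :
    ∃ i ∈ D.I, ∃ j ∈ D.I, x = i * a * j := by
  obtain ⟨n, hn, i₁, hi₁, j₁, hj₁, rfl⟩ := ha
  obtain ⟨i₂, hi₂, j₂, hj₂, rfl⟩ := IwI_rep D n hn hx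
  exact ⟨i₂ * i₁⁻¹, D.I.mul_mem hi₂ (D.I.inv_mem hi₁), j₁⁻¹ * j₂,
    D.I.mul_mem (D.I.inv_mem hj₁) hj₂, by group⟩

/-! simple reflections, coerced to `W` -/

lemma simple_coe_inv (b : B) : ((D.cs.simple b : D.Waff) : W)⁻¹ = ((D.cs.simple b : D.Waff) : W) := by
  rw [← InvMemClass.coe_inv, D.cs.inv_simple]

lemma simple_coe_mul_self (b : B) :
    ((D.cs.simple b : D.Waff) : W) * ((D.cs.simple b : D.Waff) : W) = 1 := by
  rw [← MulMemClass.coe_mul, D.cs.simple_mul_simple_self, OneMemClass.coe_one]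

lemma simple_coe_ne_one (b : B) : ((D.cs.simple b : D.Waff) : W) ≠ 1 := by
  intro h
  have h1 : (D.cs.simple b : D.Waff) = 1 := Subtype.coe_injective (by simpa using h)
  have h2 := D.cs.length_simple b
  rw [h1] at h2
  simp at h2

lemma T3' {b : B} {w : W} {g h : G} (hg : g ∈ IwI D.I D.π ((D.cs.simple b : D.Waff) : W))
    (hh : h ∈ IwI D.I D.π w) :
    g * h ∈ IwI D.I D.π w ∪ IwI D.I D.π (((D.cs.simple b : D.Waff) : W) * w) := by
  obtain ⟨ns, hns, i, hi, j, hj, rfl⟩ := hg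
  obtain ⟨nw, hnw, i', hi', j', hj', rfl⟩ := hh
  have key := D.T3 b w ns nw hns hnw (j * i') (D.I.mul_mem hj hi')
  have heq : i * (ns : G) * j * (i' * (nw : G) * j') = i * ((ns : G) * (j * i') * (nw : G)) * j' := by
    group
  rw [heq]
  rcases key with hk | hk
  · exact Or.inl (mul_mem_IwI_right D hj' (mul_mem_IwI_left D hi hk))
  · exact Or.inr (mul_mem_IwI_right D hj' (mul_mem_IwI_left D hi hk))

lemma T3r {b : B} {w : W} {g h : G} (hg : g ∈ IwI D.I D.π w)
    (hh : h ∈ IwI D.I D.π ((D.cs.simple b : D.Waff) : W)) :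
    g * h ∈ IwI D.I D.π w ∪ IwI D.I D.π (w * ((D.cs.simple b : D.Waff) : W)) := by
  have h1 : h⁻¹ ∈ IwI D.I D.π ((D.cs.simple b : D.Waff) : W) := by
    have := inv_mem_IwI D hh
    rwa [simple_coe_inv] at this
  have h2 : g⁻¹ ∈ IwI D.I D.π w⁻¹ := inv_mem_IwI D hg
  have h3 := T3' D h1 h2
  rcases h3 with hk | hk
  · left
    have := inv_mem_IwI D hk
    simpa using this
  · right
    have := inv_mem_IwI D hk
    rw [mul_inv_rev, inv_inv, simple_coe_inv] at this
    simpa using this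

/-! Ω-related lemmas -/

lemma conj_mem_I (n : D.N) (hu : D.π n ∈ D.Om) {i : G} (hi : i ∈ D.I) :
    (n : G) * i * ((n : G))⁻¹ ∈ D.I :=
  D.TOm n hu i hi

lemma conj_mem_I' (n : D.N) (hu : D.π n ∈ D.Om) {i : G} (hi : i ∈ D.I) :
    ((n : G))⁻¹ * i * (n : G) ∈ D.I := by
  have : D.π n⁻¹ ∈ D.Om := by rw [map_inv]; exact D.Om.inv_mem hu
  simpa using D.TOm n⁻¹ this i hi

lemma mem_omega_iff_right (n : D.N) (hu : D.π n ∈ D.Om) {g : G} :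
    g ∈ IwI D.I D.π (D.π n) ↔ ((n : G))⁻¹ * g ∈ D.I := by
  constructor
  · intro hg
    obtain ⟨i, hi, j, hj, rfl⟩ := IwI_rep D n rfl hg
    have : ((n : G))⁻¹ * (i * (n : G) * j) = (((n : G))⁻¹ * i * (n : G)) * j := by group
    rw [this]
    exact D.I.mul_mem (conj_mem_I' D n hu hi) hj
  · intro hg
    have : g = 1 * (n : G) * (((n : G))⁻¹ * g) := by group
    exact this ▸ mem_IwI D n rfl D.I.one_mem hg

lemma mem_omega_iff_left (n : D.N) (hu : D.π n ∈ D.Om) {g : G} :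
    g ∈ IwI D.I D.π (D.π n) ↔ g * ((n : G))⁻¹ ∈ D.I := by
  rw [mem_omega_iff_right D n hu]
  constructor
  · intro h
    have : g * ((n : G))⁻¹ = (n : G) * (((n : G))⁻¹ * g) * ((n : G))⁻¹ := by group
    rw [this]
    exact conj_mem_I D n hu h
  · intro h
    have : ((n : G))⁻¹ * g = ((n : G))⁻¹ * (g * ((n : G))⁻¹) * (n : G) := by group
    rw [this]
    exact conj_mem_I' D n hu h

lemma mem_IwI_omega_mul (n : D.N) (hu : D.π n ∈ D.Om) (v : W) {x : G} :
    x ∈ IwI D.I D.π (D.π n * v) ↔ ((n : G))⁻¹ * x ∈ IwI D.I D.π v := by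
  constructor
  · intro hx
    obtain ⟨m, hm, i, hi, j, hj, rfl⟩ := hx
    have hπ : D.π (n⁻¹ * m) = v := by rw [map_mul, map_inv, hm]; group
    have : ((n : G))⁻¹ * (i * (m : G) * j)
        = (((n : G))⁻¹ * i * (n : G)) * ((n⁻¹ * m : D.N) : G) * j := by push_cast; group
    rw [this]
    exact mem_IwI D _ hπ (conj_mem_I' D n hu hi) hj
  · intro hx
    obtain ⟨m, hm, i, hi, j, hj, hx'⟩ := hx
    have hπ : D.π (n * m) = D.π n * v := by rw [map_mul, hm]
    have hx2 : x = (n : G) * (i * (m : G) * j) := by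
      rw [← hx']; group
    have : x = ((n : G) * i * ((n : G))⁻¹) * ((n * m : D.N) : G) * j := by
      rw [hx2]; push_cast; group
    rw [this]
    exact mem_IwI D _ hπ (conj_mem_I D n hu hi) hj

lemma mem_IwI_mul_omega (n : D.N) (hu : D.π n ∈ D.Om) (v : W) {x : G} :
    x ∈ IwI D.I D.π (v * D.π n) ↔ x * ((n : G))⁻¹ ∈ IwI D.I D.π v := by
  constructor
  · intro hx
    obtain ⟨m, hm, i, hi, j, hj, rfl⟩ := hx
    have hπ : D.π (m * n⁻¹) = v := by rw [map_mul, map_inv, hm]; group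
    have : i * (m : G) * j * ((n : G))⁻¹
        = i * ((m * n⁻¹ : D.N) : G) * ((n : G) * j * ((n : G))⁻¹) := by push_cast; group
    rw [this]
    exact mem_IwI D _ hπ hi (conj_mem_I D n hu hj)
  · intro hx
    obtain ⟨m, hm, i, hi, j, hj, hx'⟩ := hx
    have hπ : D.π (m * n) = v * D.π n := by rw [map_mul, hm]
    have hx2 : x = i * (m : G) * j * (n : G) := by
      have h3 : x = x * ((n : G))⁻¹ * (n : G) := by group
      rw [h3, hx']
    have : x = i * ((m * n : D.N) : G) * (((n : G))⁻¹ * j * (n : G)) := by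
      rw [hx2]; push_cast; group
    rw [this]
    exact mem_IwI D _ hπ hi (conj_mem_I' D n hu hj)

end SetLevel

end IHAux

namespace IHAux

variable {G W B : Type} [Group G] [Group W] {M : CoxeterMatrix B}

section LenLevel

variable (D : IwahoriHeckeSetup G W B M)

lemma exists_decomp (w : W) :
    ∃ (wa : D.Waff) (u : D.Om), w = (wa : W) * (u : W) ∧ D.len w = D.cs.length wa := by
  obtain ⟨wa, hwa, u, hu, hw⟩ := D.sd_prod w
  refine ⟨⟨wa, hwa⟩, ⟨u, hu⟩, hw, ?_⟩
  rw [hw]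
  exact D.len_spec ⟨wa, hwa⟩ ⟨u, hu⟩

lemma len_omega {u : W} (hu : u ∈ D.Om) : D.len u = 0 := by
  have := D.len_spec 1 ⟨u, hu⟩
  simpa [D.cs.length_one] using this

/-- every element of positive extended length factors as `v * s` with `s` simple and
`len v = len w - 1`; moreover left multiplication by a simple reflection that increases
the length of `w` also increases the length of `v`. -/
lemma exists_right_factor {w : W} (h : 0 < D.len w) :
    ∃ (b : B) (v : W), w = v * ((D.cs.simple b : D.Waff) : W) ∧ D.len v + 1 = D.len w ∧
      ∀ b₂ : B, D.len (((D.cs.simple b₂ : D.Waff) : W) * w) = D.len w + 1 →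
        D.len (((D.cs.simple b₂ : D.Waff) : W) * v) = D.len v + 1 := by
  obtain ⟨wa, u, hw, hlen⟩ := exists_decomp D w
  obtain ⟨ω, hω, hprod⟩ := D.cs.exists_reduced_word wa
  have hω0 : ω ≠ [] := by
    intro h0
    rw [h0] at hω
    rw [h0] at hprod; simp [hprod] at hlen
    omega
  obtain ⟨ω', bl, rfl⟩ := List.eq_nil_or_concat ω |>.resolve_left hω0
  have hsplit : wa = D.cs.wordProd ω' * D.cs.simple bl := by
    rw [hprod, List.concat_eq_append, D.cs.wordProd_append, D.cs.wordProd_singleton]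
  have hlenω : ω'.length + 1 = D.cs.length wa := by
    have h' : D.cs.length (D.cs.wordProd (ω'.concat bl)) = (ω'.concat bl).length := hω
    rw [hprod, h']; simp
  have hlen' : D.cs.length (D.cs.wordProd ω') = ω'.length := by
    have h1 := D.cs.length_wordProd_le ω'
    have h2 : D.cs.length wa ≤ D.cs.length (D.cs.wordProd ω') + 1 := by
      rw [hsplit]
      have := D.cs.length_mul_le (D.cs.wordProd ω') (D.cs.simple bl)
      simpa [D.cs.length_simple] using this
    omega
  obtain ⟨b', hb'⟩ := D.TS (u : W)⁻¹ (D.Om.inv_mem u.2) bl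
  set v : W := ((D.cs.wordProd ω' : D.Waff) : W) * (u : W) with hv
  have hlenv : D.len v = ω'.length := by
    rw [hv, D.len_spec (D.cs.wordProd ω') u, hlen']
  refine ⟨b', v, ?_, ?_, ?_⟩
  · -- w = v * s b'
    have : ((D.cs.simple b' : D.Waff) : W) = (u : W)⁻¹ * ((D.cs.simple bl : D.Waff) : W) * (u : W) := by
      rw [← hb']; group
    rw [this, hv, hw, hsplit]
    push_cast
    group
  · omega
  · intro b₂ hb₂
    have e1 : ((D.cs.simple b₂ : D.Waff) : W) * w = ((D.cs.simple b₂ * wa : D.Waff) : W) * (u : W) := by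
      rw [hw]; push_cast; group
    have e2 : ((D.cs.simple b₂ : D.Waff) : W) * v
        = ((D.cs.simple b₂ * D.cs.wordProd ω' : D.Waff) : W) * (u : W) := by
      rw [hv]; push_cast; group
    rw [e1, D.len_spec (D.cs.simple b₂ * wa) u] at hb₂
    rw [e2, D.len_spec (D.cs.simple b₂ * D.cs.wordProd ω') u, hlenv]
    -- from ℓ(s b₂ * wa) = ℓ(wa) + 1 deduce ℓ(s b₂ * π ω') = ℓ(π ω') + 1
    have h3 : D.cs.simple b₂ * wa = (D.cs.simple b₂ * D.cs.wordProd ω') * D.cs.simple bl := by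
      rw [hsplit]; group
    have h4 : D.cs.length (D.cs.simple b₂ * wa)
        ≤ D.cs.length (D.cs.simple b₂ * D.cs.wordProd ω') + 1 := by
      rw [h3]
      have := D.cs.length_mul_le (D.cs.simple b₂ * D.cs.wordProd ω') (D.cs.simple bl)
      simpa [D.cs.length_simple] using this
    have h5 := D.cs.length_simple_mul (D.cs.wordProd ω') b₂
    omega

lemma len_ne_imp_ne {v w : W} (h : D.len v ≠ D.len w) : v ≠ w := fun e => h (by rw [e])

/-- The key multiplication theorem: if `ℓ(s·w) = ℓ(w) + 1` then `IsI · IwI = IswI`. -/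
theorem key_mul : ∀ (r : ℕ) (b : B) (w : W), D.len w = r →
    D.len (((D.cs.simple b : D.Waff) : W) * w) = r + 1 →
    ∀ g ∈ IwI D.I D.π ((D.cs.simple b : D.Waff) : W), ∀ h ∈ IwI D.I D.π w,
      g * h ∈ IwI D.I D.π (((D.cs.simple b : D.Waff) : W) * w) := by
  intro r
  induction r using Nat.strong_induction_on with
  | _ r ih =>
    intro b w hw hlen g hg h hh
    rcases r with _ | r'
    · -- base case : w ∈ Ω
      obtain ⟨wa, u, hdecomp, hlw⟩ := exists_decomp D w
      have hwa1 : wa = 1 := by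
        rw [hw] at hlw
        exact (D.cs.length_eq_zero_iff).mp hlw.symm
      have hwu : w = (u : W) := by rw [hdecomp, hwa1]; simp
      -- h = n * i₀ for a representative n of w
      obtain ⟨n, hn⟩ := D.π_surjective w
      have hnOm : D.π n ∈ D.Om := by rw [hn, hwu]; exact u.2
      have hi₀ : ((n : G))⁻¹ * h ∈ D.I := (mem_omega_iff_right D n hnOm).mp (hn ▸ hh)
      obtain ⟨ns, hns⟩ := D.π_surjective ((D.cs.simple b : D.Waff) : W)
      obtain ⟨a, ha, c, hc, rfl⟩ := IwI_rep D ns hns hg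
      have hπ : D.π (ns * n) = ((D.cs.simple b : D.Waff) : W) * w := by rw [map_mul, hns, hn]
      have heq : a * (ns : G) * c * h
          = a * ((ns * n : D.N) : G) * ((((n : G))⁻¹ * c * (n : G)) * (((n : G))⁻¹ * h)) := by
        push_cast; group
      rw [heq]
      exact mem_IwI D _ hπ ha (D.I.mul_mem (conj_mem_I' D n hnOm hc) hi₀)
    · -- inductive step
      rcases T3' D hg hh with hbad | hgood
      swap
      · exact hgood
      · -- g * h ∈ IwI w : derive a contradiction
        exfalso
        obtain ⟨bl, v, hwv, hlenv, haux⟩ := exists_right_factor D (w := w) (by omega)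
        have hlv : D.len v = r' := by omega
        have hsv : D.len (((D.cs.simple b : D.Waff) : W) * v) = r' + 1 := by
          have := haux b (by omega)
          omega
        obtain ⟨nv, hnv⟩ := D.π_surjective v
        obtain ⟨nt, hnt⟩ := D.π_surjective ((D.cs.simple bl : D.Waff) : W)
        have hx : ((nv * nt : D.N) : G) ∈ IwI D.I D.π w := by
          have : D.π (nv * nt) = w := by rw [map_mul, hnv, hnt, hwv]
          exact this ▸ self_mem_IwI D (nv * nt)
        obtain ⟨i, hi, j, hj, hxe⟩ := mem_doubleCoset D hbad hx
        set g' := i * g with hg'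
        have hg'mem : g' ∈ IwI D.I D.π ((D.cs.simple b : D.Waff) : W) := mul_mem_IwI_left D hi hg
        have hh'mem : h * j ∈ IwI D.I D.π w := mul_mem_IwI_right D hj hh
        have hnt' : (nt⁻¹ : D.N) = nt⁻¹ := rfl
        have hntinv : ((nt : G))⁻¹ ∈ IwI D.I D.π ((D.cs.simple bl : D.Waff) : W) := by
          have h1 : D.π nt⁻¹ = ((D.cs.simple bl : D.Waff) : W) := by
            rw [map_inv, hnt, simple_coe_inv]
          have h2 := self_mem_IwI D nt⁻¹
          rw [h1] at h2
          simpa using h2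
        have hcase := T3r D hh'mem hntinv
        have hws : w * ((D.cs.simple bl : D.Waff) : W) = v := by
          rw [hwv, mul_assoc, simple_coe_mul_self, mul_one]
        rw [hws] at hcase
        have hnveq : (nv : G) = g' * (h * j * ((nt : G))⁻¹) := by
          have : ((nv * nt : D.N) : G) = (nv : G) * (nt : G) := by push_cast; ring_nf
          rw [this] at hxe
          rw [hg']
          have := hxe
          -- hxe : ↑nv * ↑nt = i * (g * h) * j
          have h5 : (nv : G) = i * (g * h) * j * ((nt : G))⁻¹ := by
            rw [← hxe]; group
          rw [h5]; group
        have hnvv : (nv : G) ∈ IwI D.I D.π v := hnv ▸ self_mem_IwI D nv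
        rcases hcase with hc1 | hc2
        · -- h * j * nt⁻¹ ∈ IwI w : nv ∈ IsI·IwI ⊆ IwI w ∪ IwI (s w)
          rcases T3' D hg'mem hc1 with hk | hk
          · rw [hnveq] at hnvv
            have := eq_of_mem_IwI D hnvv hk
            have := len_ne_imp_ne D (v := v) (w := w) (by omega)
            exact this ‹v = w›
          · rw [hnveq] at hnvv
            have := eq_of_mem_IwI D hnvv hk
            have hne := len_ne_imp_ne D (v := v)
              (w := ((D.cs.simple b : D.Waff) : W) * w) (by omega)
            exact hne this
        · -- h * j * nt⁻¹ ∈ IwI v : nv ∈ IsI·IvI = I(sv)I by induction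
          have hk := ih r' (by omega) b v hlv hsv g' hg'mem _ hc2
          rw [hnveq] at hnvv
          have := eq_of_mem_IwI D hnvv hk
          have hne := len_ne_imp_ne D (v := v)
            (w := ((D.cs.simple b : D.Waff) : W) * v) (by omega)
          exact hne this

/-- uniqueness of the `IsI`-coset in the factorization of an element of `IswI`. -/
theorem key_unique (b : B) (w : W)
    (hlen : D.len (((D.cs.simple b : D.Waff) : W) * w) = D.len w + 1) {x : G}
    (hx : x ∈ IwI D.I D.π (((D.cs.simple b : D.Waff) : W) * w)) :
    ∃! y : G ⧸ D.I, Quotient.out y ∈ IwI D.I D.π ((D.cs.simple b : D.Waff) : W) ∧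
      (Quotient.out y)⁻¹ * x ∈ IwI D.I D.π w := by
  obtain ⟨ns, hns⟩ := D.π_surjective ((D.cs.simple b : D.Waff) : W)
  obtain ⟨nw, hnw⟩ := D.π_surjective w
  have hπ : D.π (ns * nw) = ((D.cs.simple b : D.Waff) : W) * w := by rw [map_mul, hns, hnw]
  obtain ⟨i, hi, j, hj, hxe⟩ := IwI_rep D (ns * nw) hπ hx
  -- the distinguished coset
  set y₀ : G ⧸ D.I := QuotientGroup.mk (i * (ns : G)) with hy₀
  have hout : ∃ k ∈ D.I, Quotient.out y₀ = i * (ns : G) * k := by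
    have h1 : QuotientGroup.mk (Quotient.out y₀) = y₀ := QuotientGroup.out_eq' y₀
    rw [hy₀] at h1
    have h2 : (i * (ns : G))⁻¹ * Quotient.out y₀ ∈ D.I := (QuotientGroup.eq).mp h1.symm
    exact ⟨_, h2, by group⟩
  obtain ⟨k, hk, hky⟩ := hout
  -- first, any two cosets satisfying the predicate agree
  have huniq : ∀ y₁ y₂ : G ⧸ D.I,
      (Quotient.out y₁ ∈ IwI D.I D.π ((D.cs.simple b : D.Waff) : W) ∧
        (Quotient.out y₁)⁻¹ * x ∈ IwI D.I D.π w) →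
      (Quotient.out y₂ ∈ IwI D.I D.π ((D.cs.simple b : D.Waff) : W) ∧
        (Quotient.out y₂)⁻¹ * x ∈ IwI D.I D.π w) → y₁ = y₂ := by
    intro y₁ y₂ ⟨h₁s, h₁w⟩ ⟨h₂s, h₂w⟩
    have hinv : (Quotient.out y₂)⁻¹ ∈ IwI D.I D.π ((D.cs.simple b : D.Waff) : W) := by
      have := inv_mem_IwI D h₂s; rwa [simple_coe_inv] at this
    have hprod := T3' D hinv h₁s
    rw [simple_coe_mul_self] at hprod
    rcases hprod with hp | hp
    · -- (y₂)⁻¹ y₁ ∈ IsI : contradiction with disjointness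
      exfalso
      have h6 : (Quotient.out y₁)⁻¹ * x
          = ((Quotient.out y₂)⁻¹ * Quotient.out y₁)⁻¹ * ((Quotient.out y₂)⁻¹ * x) := by group
      have h7 : ((Quotient.out y₂)⁻¹ * Quotient.out y₁)⁻¹
          ∈ IwI D.I D.π ((D.cs.simple b : D.Waff) : W) := by
        have := inv_mem_IwI D hp; rwa [simple_coe_inv] at this
      have h8 := key_mul D (D.len w) b w rfl hlen _ h7 _ h₂w
      rw [← h6] at h8
      have h9 := eq_of_mem_IwI D h₁w h8
      have h10 : D.len w ≠ D.len (((D.cs.simple b : D.Waff) : W) * w) := by omega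
      exact (len_ne_imp_ne D h10) h9
    · -- (y₂)⁻¹ y₁ ∈ I : same coset
      rw [IwI_one] at hp
      have := (QuotientGroup.eq (s := D.I)).mpr hp
      rw [QuotientGroup.out_eq', QuotientGroup.out_eq'] at this
      exact this.symm
  have hy0s : Quotient.out y₀ ∈ IwI D.I D.π ((D.cs.simple b : D.Waff) : W) := by
    rw [hky]
    have h1 : i * (ns : G) ∈ IwI D.I D.π ((D.cs.simple b : D.Waff) : W) := by
      have he : i * (ns : G) = i * (ns : G) * 1 := by group
      exact he ▸ mem_IwI D ns hns hi D.I.one_mem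
    exact mul_mem_IwI_right D hk h1
  have hy0w : (Quotient.out y₀)⁻¹ * x ∈ IwI D.I D.π w := by
    rw [hky, hxe]
    have he : (i * (ns : G) * k)⁻¹ * (i * ((ns * nw : D.N) : G) * j)
        = k⁻¹ * (nw : G) * j := by push_cast; group
    rw [he]
    exact mem_IwI D nw hnw (D.I.inv_mem hk) hj
  exact ⟨y₀, ⟨hy0s, hy0w⟩, fun y hy => huniq y y₀ hy ⟨hy0s, hy0w⟩⟩

end LenLevel

end IHAux

namespace IHAux

variable {G : Type} [Group G]

/-- the cosets on which `f` is nonzero -/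
def csupp (I : Subgroup G) (f : G → ℤ) : Set (G ⧸ I) := {y | f (Quotient.out y) ≠ 0}

/-- functions that are bi-`I`-invariant with finitely many nonzero cosets -/
structure Hok (I : Subgroup G) (f : G → ℤ) : Prop where
  left : ∀ i ∈ I, ∀ g : G, f (i * g) = f g
  right : ∀ i ∈ I, ∀ g : G, f (g * i) = f g
  fin : (csupp I f).Finite

variable {I : Subgroup G}

lemma out_mk_spec (g : G) :
    ∃ i ∈ I, Quotient.out (QuotientGroup.mk g : G ⧸ I) = g * i := by
  have h1 : QuotientGroup.mk (Quotient.out (QuotientGroup.mk g : G ⧸ I)) =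
      (QuotientGroup.mk g : G ⧸ I) := QuotientGroup.out_eq' _
  have h2 : g⁻¹ * Quotient.out (QuotientGroup.mk g : G ⧸ I) ∈ I :=
    (QuotientGroup.eq).mp h1.symm
  exact ⟨_, h2, by group⟩

lemma eval_out {f : G → ℤ} (hr : ∀ i ∈ I, ∀ g : G, f (g * i) = f g) (g : G) :
    f (Quotient.out (QuotientGroup.mk g : G ⧸ I)) = f g := by
  obtain ⟨i, hi, he⟩ := out_mk_spec (I := I) g
  rw [he, hr i hi g]

lemma mk_eq_mk_iff {g h : G} :
    (QuotientGroup.mk g : G ⧸ I) = QuotientGroup.mk h ↔ g⁻¹ * h ∈ I := QuotientGroup.eq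

lemma eq_mk_of_out_rel {y : G ⧸ I} {g : G} (h : (Quotient.out y)⁻¹ * g ∈ I) :
    y = QuotientGroup.mk g := by
  rw [← QuotientGroup.out_eq' y]
  exact (QuotientGroup.eq).mpr h

section Conv

/-- convolution as a `Finset` sum -/
lemma hconv_eq_sum {f f' : G → ℤ} (hf : (csupp I f).Finite) (x : G) :
    hconv I f f' x = ∑ y ∈ hf.toFinset, f (Quotient.out y) * f' ((Quotient.out y)⁻¹ * x) := by
  apply finsum_eq_finset_sum_of_support_subset
  intro y hy
  simp only [Function.mem_support] at hy
  have : f (Quotient.out y) ≠ 0 := fun h0 => hy (by rw [h0, zero_mul])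
  simpa [Set.Finite.coe_toFinset, csupp] using this

lemma hconv_eq_sum_of_subset {f f' : G → ℤ} {s : Finset (G ⧸ I)} (hs : csupp I f ⊆ ↑s) (x : G) :
    hconv I f f' x = ∑ y ∈ s, f (Quotient.out y) * f' ((Quotient.out y)⁻¹ * x) := by
  apply finsum_eq_finset_sum_of_support_subset
  intro y hy
  simp only [Function.mem_support] at hy
  have : f (Quotient.out y) ≠ 0 := fun h0 => hy (by rw [h0, zero_mul])
  exact hs this

/-- pointwise description used everywhere: if some coset contributes then nonzero -/
lemma hconv_ne_zero {f f' : G → ℤ} {x : G} (h : hconv I f f' x ≠ 0) :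
    ∃ y : G ⧸ I, f (Quotient.out y) ≠ 0 ∧ f' ((Quotient.out y)⁻¹ * x) ≠ 0 := by
  by_contra hc
  push_neg at hc
  apply h
  apply finsum_eq_zero_of_forall_eq_zero
  intro y
  rcases eq_or_ne (f (Quotient.out y)) 0 with h0 | h0
  · rw [h0, zero_mul]
  · rw [hc y h0, mul_zero]

/-- linearity in the right argument -/
lemma hconv_add_right {f g₁ g₂ : G → ℤ} (hf : (csupp I f).Finite) (c : ℤ) :
    hconv I f (fun x => g₁ x + c * g₂ x)
      = fun x => hconv I f g₁ x + c * hconv I f g₂ x := by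
  funext x
  rw [hconv_eq_sum hf, hconv_eq_sum hf, hconv_eq_sum hf, Finset.mul_sum, ← Finset.sum_add_distrib]
  congr 1
  funext y
  ring

/-- linearity in the left argument -/
lemma hconv_add_left {f₁ f₂ g : G → ℤ} (h₁ : (csupp I f₁).Finite) (h₂ : (csupp I f₂).Finite)
    (c : ℤ) :
    hconv I (fun x => f₁ x + c * f₂ x) g
      = fun x => hconv I f₁ g x + c * hconv I f₂ g x := by
  have hu : (csupp I f₁ ∪ csupp I f₂).Finite := h₁.union h₂
  have hsub : csupp I (fun x => f₁ x + c * f₂ x) ⊆ ↑hu.toFinset := by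
    intro y hy
    simp only [csupp, Set.mem_setOf_eq] at hy
    simp only [Set.Finite.coe_toFinset, Set.mem_union, csupp, Set.mem_setOf_eq]
    by_contra hc
    push_neg at hc
    rw [hc.1, hc.2] at hy
    simp at hy
  have hs₁ : csupp I f₁ ⊆ ↑hu.toFinset := by
    rw [Set.Finite.coe_toFinset]; exact Set.subset_union_left
  have hs₂ : csupp I f₂ ⊆ ↑hu.toFinset := by
    rw [Set.Finite.coe_toFinset]; exact Set.subset_union_right
  funext x
  rw [hconv_eq_sum_of_subset hsub, hconv_eq_sum_of_subset hs₁, hconv_eq_sum_of_subset hs₂,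
    Finset.mul_sum, ← Finset.sum_add_distrib]
  congr 1
  funext y
  ring

lemma hconv_smul_left {f g : G → ℤ} (hf : (csupp I f).Finite) (c : ℤ) :
    hconv I (fun x => c * f x) g = fun x => c * hconv I f g x := by
  have hsub : csupp I (fun x => c * f x) ⊆ ↑hf.toFinset := by
    intro y hy
    simp only [csupp, Set.mem_setOf_eq] at hy
    simp only [Set.Finite.coe_toFinset, csupp, Set.mem_setOf_eq]
    exact right_ne_zero_of_mul hy
  funext x
  rw [hconv_eq_sum_of_subset hsub, hconv_eq_sum hf, Finset.mul_sum]
  congr 1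
  funext y
  ring

lemma hconv_smul_right {f g : G → ℤ} (hf : (csupp I f).Finite) (c : ℤ) :
    hconv I f (fun x => c * g x) = fun x => c * hconv I f g x := by
  funext x
  rw [hconv_eq_sum hf, hconv_eq_sum hf, Finset.mul_sum]
  congr 1
  funext y
  ring

end Conv

end IHAux

namespace IHAux

section IwGeneric

variable {G : Type} [Group G] {W : Type} [Group W] {N : Subgroup G} (I : Subgroup G) (π : N →* W)

lemma iw_of_mem {w : W} {x : G} (h : x ∈ IwI I π w) : iw I π w x = 1 :=
  Set.indicator_of_mem h _

lemma iw_of_not_mem {w : W} {x : G} (h : x ∉ IwI I π w) : iw I π w x = 0 :=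
  Set.indicator_of_notMem h _

lemma mem_of_iw_ne_zero {w : W} {x : G} (h : iw I π w x ≠ 0) : x ∈ IwI I π w := by
  by_contra hc
  exact h (iw_of_not_mem I π hc)

end IwGeneric

section HeckeLevel

variable {G W B : Type} [Group G] [Group W] {M : CoxeterMatrix B} (D : IwahoriHeckeSetup G W B M)

lemma mem_leftCosetsIn {v : W} {y : G ⧸ D.I} :
    y ∈ leftCosetsIn D.I (IwI D.I D.π v) ↔ Quotient.out y ∈ IwI D.I D.π v := by
  constructor
  · rintro ⟨c, hc, rfl⟩
    obtain ⟨i, hi, he⟩ := out_mk_spec (I := D.I) c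
    rw [he]
    exact mul_mem_IwI_right D hi hc
  · intro h
    exact ⟨Quotient.out y, h, QuotientGroup.out_eq' y⟩

lemma csupp_iw (v : W) : csupp D.I (iw D.I D.π v) = leftCosetsIn D.I (IwI D.I D.π v) := by
  ext y
  simp only [csupp, Set.mem_setOf_eq, mem_leftCosetsIn D]
  constructor
  · exact mem_of_iw_ne_zero D.I D.π
  · intro h
    rw [iw_of_mem D.I D.π h]
    norm_num

lemma hok_iw (v : W) : Hok D.I (iw D.I D.π v) := by
  refine ⟨?_, ?_, ?_⟩
  · intro i hi g
    by_cases hg : g ∈ IwI D.I D.π v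
    · rw [iw_of_mem D.I D.π (mul_mem_IwI_left D hi hg), iw_of_mem D.I D.π hg]
    · rw [iw_of_not_mem D.I D.π hg, iw_of_not_mem D.I D.π]
      intro hc
      apply hg
      have : g = i⁻¹ * (i * g) := by group
      exact this ▸ mul_mem_IwI_left D (D.I.inv_mem hi) hc
  · intro i hi g
    by_cases hg : g ∈ IwI D.I D.π v
    · rw [iw_of_mem D.I D.π (mul_mem_IwI_right D hi hg), iw_of_mem D.I D.π hg]
    · rw [iw_of_not_mem D.I D.π hg, iw_of_not_mem D.I D.π]
      intro hc
      apply hg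
      have : g = (g * i) * i⁻¹ := by group
      exact this ▸ mul_mem_IwI_right D (D.I.inv_mem hi) hc
  · rw [csupp_iw D]
    exact (D.TF v).1

lemma q_eq_card (v : W) : D.q v = (D.TF v).1.toFinset.card :=
  (D.TF v).2.trans (Set.ncard_eq_toFinset_card _ (D.TF v).1)

/-- `i_1` is a left identity -/
lemma hconv_one_left {f : G → ℤ} (hf : ∀ i ∈ D.I, ∀ g : G, f (i * g) = f g) :
    hconv D.I (iw D.I D.π 1) f = f := by
  funext x
  have h1 : ∀ y : G ⧸ D.I, y ≠ QuotientGroup.mk 1 →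
      iw D.I D.π 1 (Quotient.out y) * f ((Quotient.out y)⁻¹ * x) = 0 := by
    intro y hy
    rcases eq_or_ne (iw D.I D.π 1 (Quotient.out y)) 0 with h0 | h0
    · rw [h0, zero_mul]
    · exfalso
      apply hy
      have hm := mem_of_iw_ne_zero D.I D.π h0
      rw [IwI_one] at hm
      exact eq_mk_of_out_rel (by simpa using D.I.inv_mem hm)
  rw [hconv, finsum_eq_single _ _ h1]
  obtain ⟨i, hi, he⟩ := out_mk_spec (I := D.I) (1 : G)
  rw [he, one_mul]
  have hmem : i ∈ IwI D.I D.π 1 := by rw [IwI_one]; exact hi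
  rw [iw_of_mem D.I D.π hmem, one_mul, hf i⁻¹ (D.I.inv_mem hi) x]

/-- `i_1` is a right identity -/
lemma hconv_one_right {f : G → ℤ} (hf : ∀ i ∈ D.I, ∀ g : G, f (g * i) = f g) :
    hconv D.I f (iw D.I D.π 1) = f := by
  funext x
  have h1 : ∀ y : G ⧸ D.I, y ≠ QuotientGroup.mk x →
      f (Quotient.out y) * iw D.I D.π 1 ((Quotient.out y)⁻¹ * x) = 0 := by
    intro y hy
    rcases eq_or_ne (iw D.I D.π 1 ((Quotient.out y)⁻¹ * x)) 0 with h0 | h0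
    · rw [h0, mul_zero]
    · exfalso
      apply hy
      have hm := mem_of_iw_ne_zero D.I D.π h0
      rw [IwI_one] at hm
      exact eq_mk_of_out_rel hm
  rw [hconv, finsum_eq_single _ _ h1]
  obtain ⟨i, hi, he⟩ := out_mk_spec (I := D.I) x
  rw [he]
  have h2 : (x * i)⁻¹ * x = i⁻¹ := by group
  have hmem : (x * i)⁻¹ * x ∈ IwI D.I D.π 1 := by rw [IwI_one, h2]; exact D.I.inv_mem hi
  rw [iw_of_mem D.I D.π hmem, mul_one, hf i hi x]

/-- convolution with `i_u`, `u ∈ Ω`, on the left -/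
lemma hconv_omega_left (n : D.N) (hu : D.π n ∈ D.Om) {f : G → ℤ}
    (hf : ∀ i ∈ D.I, ∀ g : G, f (i * g) = f g) :
    hconv D.I (iw D.I D.π (D.π n)) f = fun x => f (((n : G))⁻¹ * x) := by
  funext x
  have h1 : ∀ y : G ⧸ D.I, y ≠ QuotientGroup.mk (n : G) →
      iw D.I D.π (D.π n) (Quotient.out y) * f ((Quotient.out y)⁻¹ * x) = 0 := by
    intro y hy
    rcases eq_or_ne (iw D.I D.π (D.π n) (Quotient.out y)) 0 with h0 | h0
    · rw [h0, zero_mul]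
    · exfalso
      apply hy
      have hm := mem_of_iw_ne_zero D.I D.π h0
      have := (mem_omega_iff_right D n hu).mp hm
      exact eq_mk_of_out_rel (by simpa using D.I.inv_mem this)
  rw [hconv, finsum_eq_single _ _ h1]
  obtain ⟨i, hi, he⟩ := out_mk_spec (I := D.I) ((n : G))
  rw [he]
  have hmem : (n : G) * i ∈ IwI D.I D.π (D.π n) := by
    rw [mem_omega_iff_right D n hu]
    simpa using hi
  rw [iw_of_mem D.I D.π hmem, one_mul]
  have h2 : ((n : G) * i)⁻¹ * x = i⁻¹ * (((n : G))⁻¹ * x) := by group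
  rw [h2, hf i⁻¹ (D.I.inv_mem hi) _]

/-- convolution with `i_u`, `u ∈ Ω`, on the right -/
lemma hconv_omega_right (n : D.N) (hu : D.π n ∈ D.Om) {f : G → ℤ}
    (hf : ∀ i ∈ D.I, ∀ g : G, f (g * i) = f g) :
    hconv D.I f (iw D.I D.π (D.π n)) = fun x => f (x * ((n : G))⁻¹) := by
  funext x
  have h1 : ∀ y : G ⧸ D.I, y ≠ QuotientGroup.mk (x * ((n : G))⁻¹) →
      f (Quotient.out y) * iw D.I D.π (D.π n) ((Quotient.out y)⁻¹ * x) = 0 := by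
    intro y hy
    rcases eq_or_ne (iw D.I D.π (D.π n) ((Quotient.out y)⁻¹ * x)) 0 with h0 | h0
    · rw [h0, mul_zero]
    · exfalso
      apply hy
      have hm := mem_of_iw_ne_zero D.I D.π h0
      have := (mem_omega_iff_left D n hu).mp hm
      apply eq_mk_of_out_rel
      have h3 : (Quotient.out y)⁻¹ * (x * ((n : G))⁻¹) = (Quotient.out y)⁻¹ * x * ((n : G))⁻¹ := by
        group
      rw [h3]
      exact this
  rw [hconv, finsum_eq_single _ _ h1]
  obtain ⟨i, hi, he⟩ := out_mk_spec (I := D.I) (x * ((n : G))⁻¹)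
  rw [he]
  have h2 : (x * ((n : G))⁻¹ * i)⁻¹ * x = i⁻¹ * (n : G) := by group
  have hmem : (x * ((n : G))⁻¹ * i)⁻¹ * x ∈ IwI D.I D.π (D.π n) := by
    rw [h2, mem_omega_iff_right D n hu]
    have h4 : ((n : G))⁻¹ * (i⁻¹ * (n : G)) = ((n : G))⁻¹ * i⁻¹ * (n : G) := by group
    rw [h4]
    exact conj_mem_I' D n hu (D.I.inv_mem hi)
  rw [iw_of_mem D.I D.π hmem, mul_one, hf i hi _]

lemma hconv_iw_omega_left (n : D.N) (hu : D.π n ∈ D.Om) (v : W) :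
    hconv D.I (iw D.I D.π (D.π n)) (iw D.I D.π v) = iw D.I D.π (D.π n * v) := by
  rw [hconv_omega_left D n hu (hok_iw D v).left]
  funext x
  by_cases hx : x ∈ IwI D.I D.π (D.π n * v)
  · rw [iw_of_mem D.I D.π ((mem_IwI_omega_mul D n hu v).mp hx), iw_of_mem D.I D.π hx]
  · rw [iw_of_not_mem D.I D.π (fun hc => hx ((mem_IwI_omega_mul D n hu v).mpr hc)),
      iw_of_not_mem D.I D.π hx]

lemma hconv_iw_omega_right (n : D.N) (hu : D.π n ∈ D.Om) (v : W) :
    hconv D.I (iw D.I D.π v) (iw D.I D.π (D.π n)) = iw D.I D.π (v * D.π n) := by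
  rw [hconv_omega_right D n hu (hok_iw D v).right]
  funext x
  by_cases hx : x ∈ IwI D.I D.π (v * D.π n)
  · rw [iw_of_mem D.I D.π ((mem_IwI_mul_omega D n hu v).mp hx), iw_of_mem D.I D.π hx]
  · rw [iw_of_not_mem D.I D.π (fun hc => hx ((mem_IwI_mul_omega D n hu v).mpr hc)),
      iw_of_not_mem D.I D.π hx]

/-- the main multiplication rule: `i_s ⋆ i_w = i_{sw}` when lengths add -/
lemma hconv_iw_simple (b : B) (w : W)
    (hlen : D.len (((D.cs.simple b : D.Waff) : W) * w) = D.len w + 1) :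
    hconv D.I (iw D.I D.π ((D.cs.simple b : D.Waff) : W)) (iw D.I D.π w)
      = iw D.I D.π (((D.cs.simple b : D.Waff) : W) * w) := by
  funext x
  by_cases hx : x ∈ IwI D.I D.π (((D.cs.simple b : D.Waff) : W) * w)
  · obtain ⟨y, ⟨hys, hyw⟩, huni⟩ := key_unique D b w hlen hx
    have h1 : ∀ y' : G ⧸ D.I, y' ≠ y →
        iw D.I D.π ((D.cs.simple b : D.Waff) : W) (Quotient.out y') *
          iw D.I D.π w ((Quotient.out y')⁻¹ * x) = 0 := by
      intro y' hy'
      by_contra hc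
      have hne1 : iw D.I D.π ((D.cs.simple b : D.Waff) : W) (Quotient.out y') ≠ 0 :=
        left_ne_zero_of_mul hc
      have hne2 : iw D.I D.π w ((Quotient.out y')⁻¹ * x) ≠ 0 := right_ne_zero_of_mul hc
      exact hy' (huni y' ⟨mem_of_iw_ne_zero D.I D.π hne1, mem_of_iw_ne_zero D.I D.π hne2⟩)
    rw [hconv, finsum_eq_single _ _ h1, iw_of_mem D.I D.π hys, iw_of_mem D.I D.π hyw,
      iw_of_mem D.I D.π hx, one_mul]
  · rw [hconv, iw_of_not_mem D.I D.π hx]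
    apply finsum_eq_zero_of_forall_eq_zero
    intro y
    by_contra hc
    have hne1 := left_ne_zero_of_mul hc
    have hne2 := right_ne_zero_of_mul hc
    apply hx
    have hmem := key_mul D (D.len w) b w rfl hlen _ (mem_of_iw_ne_zero D.I D.π hne1) _
      (mem_of_iw_ne_zero D.I D.π hne2)
    have he : Quotient.out y * ((Quotient.out y)⁻¹ * x) = x := by group
    rwa [he] at hmem

/-- `q u = 1` for `u ∈ Ω` -/
lemma q_omega (n : D.N) (hu : D.π n ∈ D.Om) : D.q (D.π n) = 1 := by
  rw [(D.TF (D.π n)).2]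
  have : leftCosetsIn D.I (IwI D.I D.π (D.π n)) = {QuotientGroup.mk (n : G)} := by
    ext y
    rw [mem_leftCosetsIn D, Set.mem_singleton_iff]
    constructor
    · intro h
      have := (mem_omega_iff_right D n hu).mp h
      exact (eq_mk_of_out_rel (by simpa using D.I.inv_mem this)).symm ▸ rfl
    · intro h
      rw [h]
      obtain ⟨i, hi, he⟩ := out_mk_spec (I := D.I) ((n : G))
      rw [he, mem_omega_iff_right D n hu]
      simpa using hi
  rw [this, Set.ncard_singleton]

end HeckeLevel

end IHAux

namespace IHAux

section HeckeLevel2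

variable {G W B : Type} [Group G] [Group W] {M : CoxeterMatrix B} (D : IwahoriHeckeSetup G W B M)

open Classical in
/-- multiplicativity of `q` along length-additive products -/
lemma q_mul (b : B) (w : W)
    (hlen : D.len (((D.cs.simple b : D.Waff) : W) * w) = D.len w + 1) :
    D.q (((D.cs.simple b : D.Waff) : W) * w)
      = D.q ((D.cs.simple b : D.Waff) : W) * D.q w := by
  set s : W := ((D.cs.simple b : D.Waff) : W)
  set Fs := (D.TF s).1.toFinset with hFs
  set Fw := (D.TF w).1.toFinset with hFw
  set Fsw := (D.TF (s * w)).1.toFinset with hFsw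
  have hmems : ∀ y : G ⧸ D.I, y ∈ Fs ↔ Quotient.out y ∈ IwI D.I D.π s := by
    intro y; rw [hFs, Set.Finite.mem_toFinset]; exact mem_leftCosetsIn D
  have hmemw : ∀ y : G ⧸ D.I, y ∈ Fw ↔ Quotient.out y ∈ IwI D.I D.π w := by
    intro y; rw [hFw, Set.Finite.mem_toFinset]; exact mem_leftCosetsIn D
  have hmemsw : ∀ y : G ⧸ D.I, y ∈ Fsw ↔ Quotient.out y ∈ IwI D.I D.π (s * w) := by
    intro y; rw [hFsw, Set.Finite.mem_toFinset]; exact mem_leftCosetsIn D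
  set φ : (G ⧸ D.I) × (G ⧸ D.I) → G ⧸ D.I :=
    fun p => QuotientGroup.mk (Quotient.out p.1 * Quotient.out p.2) with hφ
  have himage : Fsw = (Fs ×ˢ Fw).image φ := by
    apply Finset.ext
    intro x
    constructor
    · intro hx
      have hx' := (hmemsw x).mp hx
      obtain ⟨y, ⟨hys, hyw⟩, -⟩ := key_unique D b w hlen hx'
      set z : G ⧸ D.I := QuotientGroup.mk ((Quotient.out y)⁻¹ * Quotient.out x) with hz
      obtain ⟨i, hi, he⟩ := out_mk_spec (I := D.I) ((Quotient.out y)⁻¹ * Quotient.out x)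
      have hzw : Quotient.out z ∈ IwI D.I D.π w := by
        rw [hz, he]
        exact mul_mem_IwI_right D hi hyw
      refine Finset.mem_image.mpr ⟨(y, z), Finset.mem_product.mpr ⟨(hmems y).mpr hys,
        (hmemw z).mpr hzw⟩, ?_⟩
      rw [hφ]
      show QuotientGroup.mk (Quotient.out y * Quotient.out z) = x
      rw [hz, he]
      have h2 : Quotient.out y * ((Quotient.out y)⁻¹ * Quotient.out x * i)
          = Quotient.out x * i := by group
      rw [h2]
      have h3 : (QuotientGroup.mk (Quotient.out x * i) : G ⧸ D.I)
          = QuotientGroup.mk (Quotient.out x) := by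
        rw [mk_eq_mk_iff]
        have h4 : (Quotient.out x * i)⁻¹ * Quotient.out x = i⁻¹ := by group
        rw [h4]
        exact D.I.inv_mem hi
      rw [h3, QuotientGroup.out_eq']
    · intro hx
      obtain ⟨⟨y, z⟩, hyz, rfl⟩ := Finset.mem_image.mp hx
      obtain ⟨hy, hz⟩ := Finset.mem_product.mp hyz
      apply (hmemsw _).mpr
      obtain ⟨i, hi, he⟩ := out_mk_spec (I := D.I) (Quotient.out y * Quotient.out z)
      rw [hφ]
      show Quotient.out (QuotientGroup.mk (Quotient.out y * Quotient.out z)) ∈ _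
      rw [he]
      exact mul_mem_IwI_right D hi
        (key_mul D (D.len w) b w rfl hlen _ ((hmems y).mp hy) _ ((hmemw z).mp hz))
  have hinj : Set.InjOn φ ↑(Fs ×ˢ Fw) := by
    rintro ⟨y₁, z₁⟩ h₁ ⟨y₂, z₂⟩ h₂ heq
    obtain ⟨hy₁, hz₁⟩ := Finset.mem_product.mp (Finset.mem_coe.mp h₁)
    obtain ⟨hy₂, hz₂⟩ := Finset.mem_product.mp (Finset.mem_coe.mp h₂)
    set x : G := Quotient.out y₁ * Quotient.out z₁ with hx
    have hxmem : x ∈ IwI D.I D.π (s * w) :=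
      key_mul D (D.len w) b w rfl hlen _ ((hmems y₁).mp hy₁) _ ((hmemw z₁).mp hz₁)
    obtain ⟨y, ⟨-, -⟩, huni⟩ := key_unique D b w hlen hxmem
    have hp₁ : y₁ = y := by
      apply huni
      refine ⟨(hmems y₁).mp hy₁, ?_⟩
      have h5 : (Quotient.out y₁)⁻¹ * x = Quotient.out z₁ := by rw [hx]; group
      rw [h5]
      exact (hmemw z₁).mp hz₁
    have hi2 : (Quotient.out y₂ * Quotient.out z₂)⁻¹ * x ∈ D.I := by
      apply (mk_eq_mk_iff).mp
      rw [hx]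
      exact heq.symm
    have hp₂ : y₂ = y := by
      apply huni
      refine ⟨(hmems y₂).mp hy₂, ?_⟩
      have h6 : (Quotient.out y₂)⁻¹ * x
          = Quotient.out z₂ * ((Quotient.out y₂ * Quotient.out z₂)⁻¹ * x) := by group
      rw [h6]
      exact mul_mem_IwI_right D hi2 ((hmemw z₂).mp hz₂)
    have hyy : y₁ = y₂ := hp₁.trans hp₂.symm
    have hzz : z₁ = z₂ := by
      have h7 : Quotient.out z₁ = Quotient.out z₂ * ((Quotient.out y₂ * Quotient.out z₂)⁻¹ * x) := by
        rw [hx, hyy]; group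
      have h8 : (Quotient.out z₂)⁻¹ * Quotient.out z₁ ∈ D.I := by
        rw [h7]
        have h9 : (Quotient.out z₂)⁻¹ * (Quotient.out z₂ *
            ((Quotient.out y₂ * Quotient.out z₂)⁻¹ * x)) =
            (Quotient.out y₂ * Quotient.out z₂)⁻¹ * x := by group
        rw [h9]
        exact hi2
      have := (mk_eq_mk_iff (I := D.I)).mpr h8
      rw [QuotientGroup.out_eq', QuotientGroup.out_eq'] at this
      exact this.symm
    exact Prod.ext hyy hzz
  have h1 : D.q (s * w) = Fsw.card := by rw [hFsw]; exact q_eq_card D (s * w)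
  have h2 : D.q s = Fs.card := by rw [hFs]; exact q_eq_card D s
  have h3 : D.q w = Fw.card := by rw [hFw]; exact q_eq_card D w
  rw [h1, h2, h3, himage, Finset.card_image_of_injOn hinj, Finset.card_product]

open Classical in
/-- the quadratic relation `i_s ⋆ i_s = q_s·i_1 + (q_s − 1)·i_s` -/
lemma hconv_iw_simple_self (b : B) :
    hconv D.I (iw D.I D.π ((D.cs.simple b : D.Waff) : W))
        (iw D.I D.π ((D.cs.simple b : D.Waff) : W))
      = fun x => (D.q ((D.cs.simple b : D.Waff) : W) : ℤ) * iw D.I D.π 1 x +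
          ((D.q ((D.cs.simple b : D.Waff) : W) : ℤ) - 1) *
            iw D.I D.π ((D.cs.simple b : D.Waff) : W) x := by
  set s : W := ((D.cs.simple b : D.Waff) : W) with hs
  have hsne : s ≠ 1 := simple_coe_ne_one D b
  have hf := (hok_iw D s).fin
  have hcard : (D.q s : ℤ) = (hf.toFinset.card : ℤ) := by
    have h1 : D.q s = (csupp D.I (iw D.I D.π s)).ncard := by
      rw [(D.TF s).2, csupp_iw D]
    rw [h1, Set.ncard_eq_toFinset_card _ hf]
  have hmem : ∀ y : G ⧸ D.I, y ∈ hf.toFinset ↔ Quotient.out y ∈ IwI D.I D.π s := by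
    intro y
    rw [Set.Finite.mem_toFinset]
    show iw D.I D.π s (Quotient.out y) ≠ 0 ↔ _
    constructor
    · exact mem_of_iw_ne_zero D.I D.π
    · intro h; rw [iw_of_mem D.I D.π h]; norm_num
  funext x
  rw [hconv_eq_sum hf]
  by_cases hx1 : x ∈ IwI D.I D.π 1
  · -- all q_s cosets contribute
    have hxs : x ∉ IwI D.I D.π s := by
      intro hc
      exact hsne (eq_of_mem_IwI D hc hx1)
    have hterm : ∀ y ∈ hf.toFinset,
        iw D.I D.π s (Quotient.out y) * iw D.I D.π s ((Quotient.out y)⁻¹ * x) = 1 := by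
      intro y hy
      have hys := (hmem y).mp hy
      have hinv : (Quotient.out y)⁻¹ ∈ IwI D.I D.π s := by
        have := inv_mem_IwI D hys
        rwa [hs, simple_coe_inv] at this
      have hx1' : x ∈ D.I := by rwa [IwI_one] at hx1
      have : (Quotient.out y)⁻¹ * x ∈ IwI D.I D.π s := mul_mem_IwI_right D hx1' hinv
      rw [iw_of_mem D.I D.π hys, iw_of_mem D.I D.π this, one_mul]
    rw [Finset.sum_congr rfl hterm, Finset.sum_const, nsmul_eq_mul, mul_one,
      iw_of_mem D.I D.π hx1, iw_of_not_mem D.I D.π hxs]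
    rw [hcard]
    ring
  · by_cases hxs : x ∈ IwI D.I D.π s
    · -- q_s − 1 cosets contribute
      have hmkx : QuotientGroup.mk x ∈ hf.toFinset := by
        rw [hmem]
        obtain ⟨i, hi, he⟩ := out_mk_spec (I := D.I) x
        rw [he]
        exact mul_mem_IwI_right D hi hxs
      have hterm : ∀ y ∈ hf.toFinset,
          iw D.I D.π s (Quotient.out y) * iw D.I D.π s ((Quotient.out y)⁻¹ * x)
            = 1 - (if y = QuotientGroup.mk x then 1 else 0) := by
        intro y hy
        have hys := (hmem y).mp hy
        rw [iw_of_mem D.I D.π hys, one_mul]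
        by_cases hyx : y = QuotientGroup.mk x
        · rw [if_pos hyx]
          obtain ⟨i, hi, he⟩ := out_mk_spec (I := D.I) x
          have h2 : (Quotient.out y)⁻¹ * x = i⁻¹ := by rw [hyx, he]; group
          have h3 : (Quotient.out y)⁻¹ * x ∈ IwI D.I D.π 1 := by
            rw [h2, IwI_one]; exact D.I.inv_mem hi
          rw [iw_of_not_mem D.I D.π (fun hc => hsne (eq_of_mem_IwI D hc h3))]
          norm_num
        · rw [if_neg hyx]
          have hinv : (Quotient.out y)⁻¹ ∈ IwI D.I D.π s := by
            have := inv_mem_IwI D hys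
            rwa [hs, simple_coe_inv] at this
          have hun := T3' D hinv hxs
          rw [← hs] at hun
          rw [hs, simple_coe_mul_self] at hun
          rw [← hs] at hun
          rcases hun with hk | hk
          · rw [iw_of_mem D.I D.π hk]
            norm_num
          · exfalso
            apply hyx
            rw [IwI_one] at hk
            exact eq_mk_of_out_rel hk
      rw [Finset.sum_congr rfl hterm, Finset.sum_sub_distrib, Finset.sum_const, nsmul_eq_mul,
        mul_one, Finset.sum_ite_eq' hf.toFinset (QuotientGroup.mk x) (fun _ => (1 : ℤ)),
        if_pos hmkx, iw_of_not_mem D.I D.π hx1, iw_of_mem D.I D.π hxs, hcard]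
      ring
    · -- no coset contributes
      have hterm : ∀ y ∈ hf.toFinset,
          iw D.I D.π s (Quotient.out y) * iw D.I D.π s ((Quotient.out y)⁻¹ * x) = 0 := by
        intro y hy
        have hys := (hmem y).mp hy
        rcases eq_or_ne (iw D.I D.π s ((Quotient.out y)⁻¹ * x)) 0 with h0 | h0
        · rw [h0, mul_zero]
        · exfalso
          have h2 := mem_of_iw_ne_zero D.I D.π h0
          have h3 := T3' D hys h2
          rw [← hs] at h3
          have he : Quotient.out y * ((Quotient.out y)⁻¹ * x) = x := by group
          rw [he] at h3
          rcases h3 with hk | hk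
          · exact hxs hk
          · rw [hs, simple_coe_mul_self] at hk
            exact hx1 hk
      rw [Finset.sum_eq_zero hterm, iw_of_not_mem D.I D.π hx1, iw_of_not_mem D.I D.π hxs]
      ring

end HeckeLevel2

end IHAux

namespace IHAux

section Closure

variable {G : Type} [Group G] {I : Subgroup G}

/-- left translation on the coset space -/
noncomputable def ltEquiv (i : G) : (G ⧸ I) ≃ (G ⧸ I) where
  toFun z := QuotientGroup.mk (i * Quotient.out z)
  invFun z := QuotientGroup.mk (i⁻¹ * Quotient.out z)
  left_inv z := by
    show QuotientGroup.mk (i⁻¹ * Quotient.out (QuotientGroup.mk (i * Quotient.out z))) = z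
    obtain ⟨k, hk, he⟩ := out_mk_spec (I := I) (i * Quotient.out z)
    rw [he]
    have h2 : i⁻¹ * (i * Quotient.out z * k) = Quotient.out z * k := by group
    rw [h2]
    have h3 : (QuotientGroup.mk (Quotient.out z * k) : G ⧸ I) = QuotientGroup.mk (Quotient.out z) := by
      rw [mk_eq_mk_iff]
      have : (Quotient.out z * k)⁻¹ * Quotient.out z = k⁻¹ := by group
      rw [this]
      exact I.inv_mem hk
    rw [h3, QuotientGroup.out_eq']
  right_inv z := by
    show QuotientGroup.mk (i * Quotient.out (QuotientGroup.mk (i⁻¹ * Quotient.out z))) = z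
    obtain ⟨k, hk, he⟩ := out_mk_spec (I := I) (i⁻¹ * Quotient.out z)
    rw [he]
    have h2 : i * (i⁻¹ * Quotient.out z * k) = Quotient.out z * k := by group
    rw [h2]
    have h3 : (QuotientGroup.mk (Quotient.out z * k) : G ⧸ I) = QuotientGroup.mk (Quotient.out z) := by
      rw [mk_eq_mk_iff]
      have : (Quotient.out z * k)⁻¹ * Quotient.out z = k⁻¹ := by group
      rw [this]
      exact I.inv_mem hk
    rw [h3, QuotientGroup.out_eq']

open Classical in
lemma Hok.hconv_closed {f g : G → ℤ} (hf : Hok I f) (hg : Hok I g) :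
    Hok I (hconv I f g) := by
  refine ⟨?_, ?_, ?_⟩
  · -- left invariance
    intro i hi x
    show hconv I f g (i * x) = hconv I f g x
    unfold hconv
    rw [← finsum_comp_equiv (ltEquiv (I := I) i)
      (f := fun y => f (Quotient.out y) * g ((Quotient.out y)⁻¹ * (i * x)))]
    apply finsum_congr
    intro z
    obtain ⟨k, hk, he⟩ := out_mk_spec (I := I) (i * Quotient.out z)
    show f (Quotient.out (QuotientGroup.mk (i * Quotient.out z))) *
        g ((Quotient.out (QuotientGroup.mk (i * Quotient.out z)))⁻¹ * (i * x)) = _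
    rw [he]
    have h1 : f (i * Quotient.out z * k) = f (Quotient.out z) := by
      rw [hf.right k hk, hf.left i hi]
    have h2 : (i * Quotient.out z * k)⁻¹ * (i * x) = k⁻¹ * ((Quotient.out z)⁻¹ * x) := by group
    rw [h1, h2, hg.left k⁻¹ (I.inv_mem hk)]
  · -- right invariance
    intro i hi x
    show hconv I f g (x * i) = hconv I f g x
    unfold hconv
    apply finsum_congr
    intro y
    have h2 : (Quotient.out y)⁻¹ * (x * i) = ((Quotient.out y)⁻¹ * x) * i := by group
    rw [h2, hg.right i hi]
  · -- finite coset support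
    apply Set.Finite.subset (Set.Finite.biUnion hf.fin (fun y _ =>
      Set.Finite.image (fun z => QuotientGroup.mk (Quotient.out y * Quotient.out z)) hg.fin))
    intro x hx
    have hx' : hconv I f g (Quotient.out x) ≠ 0 := hx
    obtain ⟨y, hy1, hy2⟩ := hconv_ne_zero hx'
    refine Set.mem_biUnion (hy1 : y ∈ csupp I f) ?_
    set z : G ⧸ I := QuotientGroup.mk ((Quotient.out y)⁻¹ * Quotient.out x) with hz
    obtain ⟨k, hk, he⟩ := out_mk_spec (I := I) ((Quotient.out y)⁻¹ * Quotient.out x)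
    have hzmem : z ∈ csupp I g := by
      show g (Quotient.out z) ≠ 0
      rw [hz, he, hg.right k hk]
      exact hy2
    refine ⟨z, hzmem, ?_⟩
    show QuotientGroup.mk (Quotient.out y * Quotient.out z) = x
    rw [hz, he]
    have h3 : Quotient.out y * ((Quotient.out y)⁻¹ * Quotient.out x * k) = Quotient.out x * k := by
      group
    rw [h3]
    have h4 : (QuotientGroup.mk (Quotient.out x * k) : G ⧸ I)
        = QuotientGroup.mk (Quotient.out x) := by
      rw [mk_eq_mk_iff]
      have : (Quotient.out x * k)⁻¹ * Quotient.out x = k⁻¹ := by group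
      rw [this]
      exact I.inv_mem hk
    rw [h4, QuotientGroup.out_eq']

open Classical in
/-- associativity of convolution on bi-invariant functions of finite coset support -/
lemma hconv_assoc {f g h : G → ℤ} (hf : Hok I f) (hg : Hok I g) (hh : Hok I h) :
    hconv I (hconv I f g) h = hconv I f (hconv I g h) := by
  funext x
  set F := hf.fin.toFinset with hF
  set Gg := hg.fin.toFinset with hGg
  set P := (hf.hconv_closed hg).fin.toFinset with hP
  set Q : Finset (G ⧸ I) :=
    P ∪ F.biUnion (fun y => Gg.image (fun z => QuotientGroup.mk (Quotient.out y * Quotient.out z)))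
    with hQ
  have hPQ : csupp I (hconv I f g) ⊆ ↑Q := by
    intro z hzc
    rw [hQ]
    simp only [Finset.coe_union, Set.mem_union, Finset.mem_coe]
    left
    rw [hP, Set.Finite.mem_toFinset]
    exact hzc
  have lhs_eq : hconv I (hconv I f g) h x
      = ∑ y ∈ F, ∑ z ∈ Q, f (Quotient.out y) * g ((Quotient.out y)⁻¹ * Quotient.out z) *
          h ((Quotient.out z)⁻¹ * x) := by
    rw [hconv_eq_sum_of_subset hPQ]
    rw [Finset.sum_comm]
    apply Finset.sum_congr rfl
    intro z _
    rw [hconv_eq_sum hf.fin, Finset.sum_mul]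
  have rhs_eq : hconv I f (hconv I g h) x
      = ∑ y ∈ F, ∑ z' ∈ Gg, f (Quotient.out y) * (g (Quotient.out z') *
          h ((Quotient.out z')⁻¹ * ((Quotient.out y)⁻¹ * x))) := by
    rw [hconv_eq_sum hf.fin]
    apply Finset.sum_congr rfl
    intro y _
    rw [hconv_eq_sum hg.fin, Finset.mul_sum]
  rw [lhs_eq, rhs_eq]
  apply Finset.sum_congr rfl
  intro y hyF
  -- reindex the inner sum
  set φ : (G ⧸ I) → (G ⧸ I) := fun z => QuotientGroup.mk (Quotient.out y * Quotient.out z)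
    with hφ
  have himg : Gg.image φ ⊆ Q := by
    rw [hQ]
    intro t ht
    exact Finset.mem_union_right _ (Finset.mem_biUnion.mpr ⟨y, hyF, ht⟩)
  have hvanish : ∀ z ∈ Q, z ∉ Gg.image φ →
      f (Quotient.out y) * g ((Quotient.out y)⁻¹ * Quotient.out z) *
        h ((Quotient.out z)⁻¹ * x) = 0 := by
    intro z _ hznot
    rcases eq_or_ne (g ((Quotient.out y)⁻¹ * Quotient.out z)) 0 with h0 | h0
    · rw [h0, mul_zero, zero_mul]
    · exfalso
      apply hznot
      set z' : G ⧸ I := QuotientGroup.mk ((Quotient.out y)⁻¹ * Quotient.out z) with hz'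
      obtain ⟨k, hk, he⟩ := out_mk_spec (I := I) ((Quotient.out y)⁻¹ * Quotient.out z)
      have hz'mem : z' ∈ Gg := by
        rw [hGg, Set.Finite.mem_toFinset]
        show g (Quotient.out z') ≠ 0
        rw [hz', he, hg.right k hk]
        exact h0
      refine Finset.mem_image.mpr ⟨z', hz'mem, ?_⟩
      rw [hφ]
      show QuotientGroup.mk (Quotient.out y * Quotient.out z') = z
      rw [hz', he]
      have h3 : Quotient.out y * ((Quotient.out y)⁻¹ * Quotient.out z * k)
          = Quotient.out z * k := by group
      rw [h3]
      have h4 : (QuotientGroup.mk (Quotient.out z * k) : G ⧸ I)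
          = QuotientGroup.mk (Quotient.out z) := by
        rw [mk_eq_mk_iff]
        have : (Quotient.out z * k)⁻¹ * Quotient.out z = k⁻¹ := by group
        rw [this]
        exact I.inv_mem hk
      rw [h4, QuotientGroup.out_eq']
  rw [← Finset.sum_subset himg hvanish]
  have hinj : Set.InjOn φ ↑Gg := by
    intro z₁ _ z₂ _ heq
    rw [hφ] at heq
    have h5 : (Quotient.out y * Quotient.out z₁)⁻¹ * (Quotient.out y * Quotient.out z₂) ∈ I :=
      (mk_eq_mk_iff).mp heq
    have h6 : (Quotient.out z₁)⁻¹ * Quotient.out z₂ ∈ I := by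
      have he : (Quotient.out y * Quotient.out z₁)⁻¹ * (Quotient.out y * Quotient.out z₂)
          = (Quotient.out z₁)⁻¹ * Quotient.out z₂ := by group
      rwa [he] at h5
    have := (mk_eq_mk_iff (I := I)).mpr h6
    rw [QuotientGroup.out_eq', QuotientGroup.out_eq'] at this
    exact this
  rw [Finset.sum_image (fun a ha b hb hab => hinj ha hb hab)]
  apply Finset.sum_congr rfl
  intro z' _
  obtain ⟨k, hk, he⟩ := out_mk_spec (I := I) (Quotient.out y * Quotient.out z')
  rw [hφ]
  show f (Quotient.out y) *
      g ((Quotient.out y)⁻¹ * Quotient.out (QuotientGroup.mk (Quotient.out y * Quotient.out z'))) *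
      h ((Quotient.out (QuotientGroup.mk (Quotient.out y * Quotient.out z')))⁻¹ * x) = _
  rw [he]
  have h7 : (Quotient.out y)⁻¹ * (Quotient.out y * Quotient.out z' * k)
      = Quotient.out z' * k := by group
  have h8 : (Quotient.out y * Quotient.out z' * k)⁻¹ * x
      = k⁻¹ * ((Quotient.out z')⁻¹ * ((Quotient.out y)⁻¹ * x)) := by group
  rw [h7, h8, hg.right k hk, hh.left k⁻¹ (I.inv_mem hk)]
  ring

end Closure

end IHAux
/-- For a word `l = [s₁, …, s_r]` of simple reflections and `u ∈ Ω`, the element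
`i_w^* := i_{u⁻¹} ⋆ (i_{s_r} + (1 − q_{s_r})·i_1) ⋆ ⋯ ⋆ (i_{s_1} + (1 − q_{s_1})·i_1)`
of `H(G,I)` attached to the decomposition `w = s₁⋯s_r·u`. -/
noncomputable def iwStar {G W B : Type} [Group G] [Group W] {M : CoxeterMatrix B}
    (D : IwahoriHeckeSetup G W B M) (l : List B) (u : W) : G → ℤ :=
  (l.reverse.map fun b => fun g : G =>
      iw D.I D.π (D.cs.simple b : W) g +
        (1 - (D.q (D.cs.simple b : W) : ℤ)) * iw D.I D.π 1 g).foldl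
    (hconv D.I) (iw D.I D.π u⁻¹)


namespace IHAux

section Glue

variable {G : Type} [Group G] {I : Subgroup G}

lemma hok_combine {f g : G → ℤ} (hf : Hok I f) (hg : Hok I g) (c : ℤ) :
    Hok I (fun x => f x + c * g x) := by
  refine ⟨?_, ?_, ?_⟩
  · intro i hi x
    show f (i * x) + c * g (i * x) = f x + c * g x
    rw [hf.left i hi, hg.left i hi]
  · intro i hi x
    show f (x * i) + c * g (x * i) = f x + c * g x
    rw [hf.right i hi, hg.right i hi]
  · apply Set.Finite.subset (hf.fin.union hg.fin)
    intro y hy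
    have hy' : f (Quotient.out y) + c * g (Quotient.out y) ≠ 0 := hy
    by_contra hc
    simp only [Set.mem_union, csupp, Set.mem_setOf_eq, not_or, not_not] at hc
    rw [hc.1, hc.2] at hy'
    simp at hy'

lemma hok_foldl : ∀ (L : List (G → ℤ)) (f₀ : G → ℤ), Hok I f₀ → (∀ f ∈ L, Hok I f) →
    Hok I (L.foldl (hconv I) f₀)
  | [], _, h₀, _ => h₀
  | f :: L, f₀, h₀, hL => by
    rw [List.foldl_cons]
    exact hok_foldl L _ (h₀.hconv_closed (hL f List.mem_cons_self))
      (fun f' hf' => hL f' (List.mem_cons_of_mem f hf'))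

end Glue

section Final

variable {G W B : Type} [Group G] [Group W] {M : CoxeterMatrix B} (D : IwahoriHeckeSetup G W B M)

lemma hok_iwStar (l : List B) (u : W) : Hok D.I (iwStar D l u) := by
  apply hok_foldl _ _ (hok_iw D u⁻¹)
  intro f hf
  rw [List.mem_map] at hf
  obtain ⟨b, -, rfl⟩ := hf
  exact hok_combine (hok_iw D _) (hok_iw D _) _

lemma iwStar_cons (b : B) (l : List B) (u : W) :
    iwStar D (b :: l) u = hconv D.I (iwStar D l u)
      (fun g => iw D.I D.π ((D.cs.simple b : D.Waff) : W) g +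
        (1 - (D.q ((D.cs.simple b : D.Waff) : W) : ℤ)) * iw D.I D.π 1 g) := by
  unfold iwStar
  rw [List.reverse_cons, List.map_append, List.foldl_append]
  rfl

/-- `(i_s + (1 − q_s)·i_1) ⋆ i_s = q_s·i_1` -/
lemma hconv_C_simple (b : B) :
    hconv D.I (fun g => iw D.I D.π ((D.cs.simple b : D.Waff) : W) g +
        (1 - (D.q ((D.cs.simple b : D.Waff) : W) : ℤ)) * iw D.I D.π 1 g)
      (iw D.I D.π ((D.cs.simple b : D.Waff) : W))
    = fun g => (D.q ((D.cs.simple b : D.Waff) : W) : ℤ) * iw D.I D.π 1 g := by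
  rw [hconv_add_left (hok_iw D ((D.cs.simple b : D.Waff) : W)).fin (hok_iw D 1).fin
    (1 - (D.q ((D.cs.simple b : D.Waff) : W) : ℤ)),
    hconv_iw_simple_self D b, hconv_one_left D (hok_iw D ((D.cs.simple b : D.Waff) : W)).left]
  funext x
  ring

/-- `i_s ⋆ (i_s + (1 − q_s)·i_1) = q_s·i_1` -/
lemma hconv_simple_C (b : B) :
    hconv D.I (iw D.I D.π ((D.cs.simple b : D.Waff) : W))
      (fun g => iw D.I D.π ((D.cs.simple b : D.Waff) : W) g +
        (1 - (D.q ((D.cs.simple b : D.Waff) : W) : ℤ)) * iw D.I D.π 1 g)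
    = fun g => (D.q ((D.cs.simple b : D.Waff) : W) : ℤ) * iw D.I D.π 1 g := by
  rw [hconv_add_right (hok_iw D ((D.cs.simple b : D.Waff) : W)).fin
    (1 - (D.q ((D.cs.simple b : D.Waff) : W) : ℤ)),
    hconv_iw_simple_self D b, hconv_one_right D (hok_iw D ((D.cs.simple b : D.Waff) : W)).right]
  funext x
  ring

end Final

end IHAux
/-- If `w = s₁⋯s_r·u` (with the `s_i` simple, `u ∈ Ω`, `r = ℓ(w)`) is a reduced decomposition
of `w ∈ W̃`, then `i_w ⋆ i_w^* = i_w^* ⋆ i_w = q_w · i_1` in `H(G,I)`. -/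
theorem iw_mul_iwStar {G W B : Type} [Group G] [Group W]
    {M : CoxeterMatrix B} (D : IwahoriHeckeSetup G W B M)
    (w : W) (l : List B) (u : W) (hu : u ∈ D.Om)
    (hw : w = (D.cs.wordProd l : W) * u) (hred : l.length = D.len w) :
    hconv D.I (iw D.I D.π w) (iwStar D l u) =
      (fun g => (D.q w : ℤ) * iw D.I D.π 1 g) ∧
    hconv D.I (iwStar D l u) (iw D.I D.π w) =
      (fun g => (D.q w : ℤ) * iw D.I D.π 1 g) := by
  induction l generalizing w with
  | nil =>
    have hwu : w = u := by
      rw [hw, D.cs.wordProd_nil, OneMemClass.coe_one, one_mul]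
    have hstar : iwStar D [] u = iw D.I D.π u⁻¹ := rfl
    obtain ⟨n, hn⟩ := D.π_surjective u⁻¹
    have hnOm : D.π n ∈ D.Om := by rw [hn]; exact D.Om.inv_mem hu
    obtain ⟨m, hm⟩ := D.π_surjective u
    have hmOm : D.π m ∈ D.Om := by rw [hm]; exact hu
    have hq : D.q u = 1 := by
      have := IHAux.q_omega D m hmOm
      rwa [hm] at this
    constructor
    · rw [hstar, hwu]
      have h1 := IHAux.hconv_iw_omega_right D n hnOm u
      rw [hn, mul_inv_cancel] at h1
      rw [h1]
      funext g
      rw [hq]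
      norm_num
    · rw [hstar, hwu]
      have h2 := IHAux.hconv_iw_omega_left D n hnOm u
      rw [hn, inv_mul_cancel] at h2
      rw [h2]
      funext g
      rw [hq]
      norm_num
  | cons b l' ih =>
    set w' : W := ((D.cs.wordProd l' : D.Waff) : W) * u with hw'def
    have hwsplit : w = ((D.cs.simple b : D.Waff) : W) * w' := by
      rw [hw, hw'def, D.cs.wordProd_cons]
      push_cast
      group
    have hLw : D.len w = D.cs.length (D.cs.wordProd (b :: l')) := by
      rw [hw]
      exact D.len_spec (D.cs.wordProd (b :: l')) ⟨u, hu⟩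
    have hlen1 : D.cs.length (D.cs.wordProd (b :: l')) = l'.length + 1 := by
      rw [← hLw, ← hred]
      simp
    have hlen2 : D.cs.length (D.cs.wordProd l') = l'.length := by
      have h1 := D.cs.length_wordProd_le l'
      have h2 : D.cs.length (D.cs.wordProd (b :: l'))
          ≤ 1 + D.cs.length (D.cs.wordProd l') := by
        rw [D.cs.wordProd_cons]
        have := D.cs.length_mul_le (D.cs.simple b) (D.cs.wordProd l')
        simpa [D.cs.length_simple] using this
      omega
    have hlenw' : D.len w' = l'.length := by
      rw [hw'def]
      rw [D.len_spec (D.cs.wordProd l') ⟨u, hu⟩]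
      exact hlen2
    have hlensw : D.len (((D.cs.simple b : D.Waff) : W) * w') = D.len w' + 1 := by
      rw [← hwsplit, hLw, hlen1, hlenw']
    obtain ⟨ih1, ih2⟩ := ih w' hw'def (by rw [hlenw'])
    have hiw : iw D.I D.π w
        = hconv D.I (iw D.I D.π ((D.cs.simple b : D.Waff) : W)) (iw D.I D.π w') := by
      rw [hwsplit]
      exact (IHAux.hconv_iw_simple D b w' hlensw).symm
    have hqw : D.q w = D.q ((D.cs.simple b : D.Waff) : W) * D.q w' := by
      rw [hwsplit]
      exact IHAux.q_mul D b w' hlensw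
    have hokSt' : IHAux.Hok D.I (iwStar D l' u) := IHAux.hok_iwStar D l' u
    have hokCb : IHAux.Hok D.I (fun g => iw D.I D.π ((D.cs.simple b : D.Waff) : W) g +
        (1 - (D.q ((D.cs.simple b : D.Waff) : W) : ℤ)) * iw D.I D.π 1 g) :=
      IHAux.hok_combine (IHAux.hok_iw D _) (IHAux.hok_iw D _) _
    constructor
    · rw [IHAux.iwStar_cons D b l' u, hiw,
        IHAux.hconv_assoc (IHAux.hok_iw D _) (IHAux.hok_iw D w')
          (hokSt'.hconv_closed hokCb),
        ← IHAux.hconv_assoc (IHAux.hok_iw D w') hokSt' hokCb,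
        ih1,
        IHAux.hconv_smul_left (IHAux.hok_iw D 1).fin ((D.q w' : ℤ)),
        IHAux.hconv_one_left D hokCb.left,
        IHAux.hconv_smul_right (IHAux.hok_iw D ((D.cs.simple b : D.Waff) : W)).fin,
        IHAux.hconv_simple_C D b]
      funext x
      simp only []
      rw [hqw]
      push_cast
      ring
    · rw [IHAux.iwStar_cons D b l' u, hiw,
        IHAux.hconv_assoc hokSt' hokCb
          ((IHAux.hok_iw D ((D.cs.simple b : D.Waff) : W)).hconv_closed (IHAux.hok_iw D w')),
        ← IHAux.hconv_assoc hokCb (IHAux.hok_iw D ((D.cs.simple b : D.Waff) : W))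
          (IHAux.hok_iw D w'),
        IHAux.hconv_C_simple D b,
        IHAux.hconv_smul_left (IHAux.hok_iw D 1).fin
          ((D.q ((D.cs.simple b : D.Waff) : W) : ℤ)),
        IHAux.hconv_one_left D (IHAux.hok_iw D w').left,
        IHAux.hconv_smul_right hokSt'.fin,
        ih2]
      funext x
      simp only []
      rw [hqw]
      push_cast
      ring
end

section
/- For compact open subgroups X and Y of G and elements g, h ∈ G, one has 1_{gY} ⋆ 1_{hX} = μ(Y ∩ hXh⁻¹)·1_{gYhX}. -/
open MeasureTheory
open scoped Pointwise

/-! ## Setting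

`G` is a locally compact Hausdorff topological group, `μ` is a left Haar measure on `G`, and
`H` is a compact open subgroup of `G` with `μ(H) = 1`.  For functions `f, f' : G → ℝ`, their
convolution is `(f ⋆ f')(x) := ∫_G f(g)·f'(g⁻¹x) dμ(g)`, and `1_A` denotes the indicator
function of a subset `A ⊆ G`. -/

/-- The convolution `(f ⋆ f')(x) = ∫_G f(g)·f'(g⁻¹x) dμ(g)` of two real-valued functions
on `G` with respect to the measure `μ`. -/
noncomputable def mconv {G : Type} [Group G] [MeasurableSpace G]
    (μ : Measure G) (f f' : G → ℝ) : G → ℝ :=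
  fun x => ∫ g, f g * f' (g⁻¹ * x) ∂μ

lemma singleton_mul_smul {G : Type} [Group G] (a : G) (s : Set G) : ({a} : Set G) * s = a • s := by
  ext z
  simp only [Set.singleton_mul, Set.mem_image, Set.mem_smul_set, smul_eq_mul]

/-- For compact open subgroups `X, Y ⊆ G` and `g, h ∈ G`:
`1_{gY} ⋆ 1_{hX} = μ(Y ∩ hXh⁻¹) · 1_{gYhX}`. -/
theorem indicator_conv_indicator {G : Type} [Group G] [TopologicalSpace G]
    [IsTopologicalGroup G] [LocallyCompactSpace G] [T2Space G]
    [MeasurableSpace G] [BorelSpace G]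
    (μ : Measure G) [μ.IsHaarMeasure]
    (H : Subgroup G) (hHo : IsOpen (H : Set G)) (hHc : IsCompact (H : Set G))
    (hμH : μ (H : Set G) = 1)
    (X Y : Subgroup G) (hXo : IsOpen (X : Set G)) (hXc : IsCompact (X : Set G))
    (hYo : IsOpen (Y : Set G)) (hYc : IsCompact (Y : Set G)) (g h : G) :
    mconv μ (({g} * (Y : Set G)).indicator fun _ => (1 : ℝ))
        (({h} * (X : Set G)).indicator fun _ => (1 : ℝ)) =
      fun x => (μ ((Y : Set G) ∩ ((fun y => h * y * h⁻¹) '' (X : Set G)))).toReal *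
        ({g} * (Y : Set G) * {h} * (X : Set G)).indicator (fun _ => (1 : ℝ)) x := by
  funext x
  set S : Set G := (({g} : Set G) * (Y : Set G)) ∩
    ((fun t => t⁻¹ * x) ⁻¹' (({h} : Set G) * (X : Set G))) with hS
  have hgY : IsOpen (({g} : Set G) * (Y : Set G)) := by
    rw [singleton_mul_smul]; exact hYo.smul g
  have hhX : IsOpen (({h} : Set G) * (X : Set G)) := by
    rw [singleton_mul_smul]; exact hXo.smul h
  have hSopen : IsOpen S :=
    hgY.inter (hhX.preimage (continuous_inv.mul continuous_const))
  have key : (fun t => (({g} : Set G) * (Y : Set G)).indicator (fun _ => (1:ℝ)) t *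
      ((({h} : Set G) * (X : Set G)).indicator (fun _ => (1:ℝ)) (t⁻¹ * x))) = S.indicator 1 := by
    funext t
    rcases Classical.em (t ∈ ({g} : Set G) * (Y : Set G)) with h1 | h1 <;>
      rcases Classical.em (t⁻¹ * x ∈ ({h} : Set G) * (X : Set G)) with h2 | h2
    · have hm : t ∈ S := ⟨h1, h2⟩
      rw [Set.indicator_of_mem h1, Set.indicator_of_mem h2, Set.indicator_of_mem hm]
      norm_num
    · have hm : t ∉ S := fun hc => h2 hc.2
      rw [Set.indicator_of_notMem h2, Set.indicator_of_notMem hm, mul_zero]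
    · have hm : t ∉ S := fun hc => h1 hc.1
      rw [Set.indicator_of_notMem h1, Set.indicator_of_notMem hm, zero_mul]
    · have hm : t ∉ S := fun hc => h1 hc.1
      rw [Set.indicator_of_notMem h1, Set.indicator_of_notMem hm, zero_mul]
  have hval : mconv μ (({g} * (Y : Set G)).indicator fun _ => (1 : ℝ))
      (({h} * (X : Set G)).indicator fun _ => (1 : ℝ)) x = (μ S).toReal := by
    rw [mconv, key, integral_indicator_one hSopen.measurableSet, measureReal_def]
  rw [hval]
  by_cases hx : x ∈ ({g} : Set G) * (Y : Set G) * {h} * (X : Set G)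
  · have hx' := hx
    simp only [Set.mem_mul, Set.mem_singleton_iff, exists_eq_left, exists_exists_and_eq_and,
      SetLike.mem_coe] at hx'
    obtain ⟨y0, hy0, x0, hx0, rfl⟩ := hx'
    have hSeq : S = (g * y0) • ((Y : Set G) ∩ ((fun y => h * y * h⁻¹) '' (X : Set G))) := by
      ext z
      simp only [hS, Set.mem_inter_iff, Set.mem_preimage, Set.mem_mul, Set.mem_singleton_iff,
        exists_eq_left, SetLike.mem_coe, Set.mem_smul_set, Set.mem_image, smul_eq_mul]
      constructor
      · rintro ⟨⟨y, hy, rfl⟩, x2, hx2, hE⟩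
        have hx2e : x2 = h⁻¹ * ((g * y)⁻¹ * (g * y0 * h * x0)) := by
          rw [← hE]; group
        refine ⟨y0⁻¹ * y, ⟨mul_mem (inv_mem hy0) hy, x0 * x2⁻¹, mul_mem hx0 (inv_mem hx2), ?_⟩,
          by group⟩
        rw [hx2e]; group
      · rintro ⟨w, ⟨hwY, x1, hx1, hwx1⟩, rfl⟩
        refine ⟨⟨y0 * w, mul_mem hy0 hwY, by group⟩, x1⁻¹ * x0, mul_mem (inv_mem hx1) hx0, ?_⟩
        rw [← hwx1]; group
    rw [hSeq, measure_smul μ (g * y0), Set.indicator_of_mem hx, mul_one]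
  · have hSempty : S = ∅ := by
      ext z
      simp only [hS, Set.mem_inter_iff, Set.mem_preimage, Set.mem_mul, Set.mem_singleton_iff,
        exists_eq_left, SetLike.mem_coe, Set.mem_empty_iff_false, iff_false, not_and]
      rintro ⟨y, hy, rfl⟩ ⟨x2, hx2, hE⟩
      apply hx
      simp only [Set.mem_mul, Set.mem_singleton_iff, exists_eq_left, exists_exists_and_eq_and,
        SetLike.mem_coe]
      refine ⟨y, hy, x2, hx2, ?_⟩
      rw [show g * y * h * x2 = g * y * (h * x2) by group, hE]; group
    rw [hSempty, Set.indicator_of_notMem hx, measure_empty]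
    simp
end

section
/- For compact open subgroups X and Y of G and elements g, h ∈ G, one has 1_{gY} ⋆ 1_{XhX} = (μ(Y ∩ X)/μ(X ∩ hXh⁻¹))·(1_{gYX} ⋆ 1_{hX}), where YX and XhX denote set products in G. -/
open MeasureTheory
open scoped Pointwise ENNReal NNReal

section Helpers

variable {G : Type} [Group G]

lemma aux_mem_smul_set_inv_iff {B : Set G} {x t : G} : t ∈ x • B⁻¹ ↔ t⁻¹ * x ∈ B := by
  constructor
  · rintro ⟨b, hb, rfl⟩
    rw [Set.mem_inv] at hb
    simpa [smul_eq_mul, mul_inv_rev, mul_assoc] using hb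
  · intro hb
    exact ⟨x⁻¹ * t, by rwa [Set.mem_inv, mul_inv_rev, inv_inv], by
      simp [smul_eq_mul, mul_inv_cancel_left]⟩

lemma aux_singleton_mul (a : G) (s : Set G) : {a} * s = a • s := by
  ext z
  simp only [Set.mem_mul, Set.mem_singleton_iff, exists_eq_left, Set.mem_smul_set, smul_eq_mul]

lemma aux_indicator_mul (S B : Set G) (x t : G) :
    S.indicator (fun _ => (1:ℝ)) t * B.indicator (fun _ => (1:ℝ)) (t⁻¹ * x)
      = (S ∩ x • B⁻¹).indicator (fun _ => (1:ℝ)) t := by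
  by_cases hS : t ∈ S <;> by_cases hB : t⁻¹ * x ∈ B
  · rw [Set.indicator_of_mem hS, Set.indicator_of_mem hB,
      Set.indicator_of_mem (Set.mem_inter hS (aux_mem_smul_set_inv_iff.2 hB)), one_mul]
  · rw [Set.indicator_of_mem hS, Set.indicator_of_notMem hB,
      Set.indicator_of_notMem
        (fun hx => hB (aux_mem_smul_set_inv_iff.1 (Set.mem_of_mem_inter_right hx))), one_mul]
  · rw [Set.indicator_of_notMem hS,
      Set.indicator_of_notMem (fun hx => hS (Set.mem_of_mem_inter_left hx)), zero_mul]
  · rw [Set.indicator_of_notMem hS,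
      Set.indicator_of_notMem (fun hx => hS (Set.mem_of_mem_inter_left hx)), zero_mul]

lemma aux_smul_coset_eq_of_mem {X : Subgroup G} {a t : G} (ht : t ∈ a • (X : Set G)) :
    t • (X : Set G) = a • (X : Set G) := by
  obtain ⟨u, hu, rfl⟩ := ht
  show ((a * u) : G) • (X : Set G) = a • (X : Set G)
  rw [mul_smul, smul_coe_set hu]

variable [MeasurableSpace G] {μ : Measure G} [MeasurableMul G] [μ.IsMulLeftInvariant]

lemma aux_measure_coset_inter {U W : Subgroup G} {a b z : G}
    (hza : z ∈ a • (U : Set G)) (hzb : z ∈ b • (W : Set G)) :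
    μ (a • (U : Set G) ∩ b • (W : Set G)) = μ ((U : Set G) ∩ (W : Set G)) := by
  rw [← aux_smul_coset_eq_of_mem hza, ← aux_smul_coset_eq_of_mem hzb, ← Set.smul_set_inter,
    measure_smul]

lemma aux_measure_smul_inter_smul (U W : Subgroup G) (b t : G) :
    μ (t • (U : Set G) ∩ b • (W : Set G)) =
      (b • ((W : Set G) * (U : Set G))).indicator
        (fun _ => μ ((U : Set G) ∩ (W : Set G))) t := by
  by_cases ht : t ∈ b • ((W : Set G) * (U : Set G))
  · rw [Set.indicator_of_mem ht]
    obtain ⟨y, hy, rfl⟩ := ht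
    rw [Set.mem_mul] at hy
    obtain ⟨w, hw, u, hu, rfl⟩ := hy
    refine aux_measure_coset_inter (z := b * w)
      (Set.mem_smul_set.2 ⟨u⁻¹, inv_mem hu, ?_⟩) (Set.mem_smul_set.2 ⟨w, hw, rfl⟩)
    simp [smul_eq_mul, mul_assoc]
  · rw [Set.indicator_of_notMem ht]
    have hempty : t • (U : Set G) ∩ b • (W : Set G) = ∅ := by
      rw [Set.eq_empty_iff_forall_notMem]
      rintro z ⟨hz1, hz2⟩
      obtain ⟨u, hu, rfl⟩ := hz1
      obtain ⟨w, hw, hw'⟩ := hz2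
      apply ht
      refine Set.mem_smul_set.2 ⟨w * u⁻¹, Set.mul_mem_mul hw (inv_mem hu), ?_⟩
      simp only [smul_eq_mul] at hw' ⊢
      rw [← mul_assoc, hw', mul_inv_cancel_right]
    rw [hempty, measure_empty]

end Helpers

section SwapLemma

variable {G : Type} [Group G] [TopologicalSpace G] [IsTopologicalGroup G]
  [MeasurableSpace G] [BorelSpace G]

lemma aux_lintegral_coset_swap (μ : Measure G) [μ.IsMulLeftInvariant]
    (X : Subgroup G) (hXo : IsOpen (X : Set G))
    {A D : Set G} (hAc : IsCompact A) (hAm : MeasurableSet A)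
    (hDc : IsCompact D) (hDm : MeasurableSet D) :
    ∫⁻ t, A.indicator (fun _ => μ (t • (X : Set G) ∩ D)) t ∂μ
      = ∫⁻ u, D.indicator (fun _ => μ (A ∩ u • (X : Set G))) u ∂μ := by
  classical
  obtain ⟨s, hs⟩ : ∃ s : Finset G, A ∪ D ⊆ ⋃ a ∈ s, a • (X : Set G) := by
    refine (hAc.union hDc).elim_finite_subcover (fun a : G => a • (X : Set G))
      (fun a => hXo.smul a) ?_
    intro z _
    exact Set.mem_iUnion.2 ⟨z, Set.mem_smul_set.2 ⟨1, one_mem X, by simp⟩⟩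
  set cs : Finset (Set G) := s.image (fun a => a • (X : Set G)) with hcs
  have hmem : ∀ c ∈ cs, ∃ a : G, c = a • (X : Set G) := by
    intro c hc
    rw [hcs] at hc
    obtain ⟨a, _, rfl⟩ := Finset.mem_image.1 hc
    exact ⟨a, rfl⟩
  have hmeasc : ∀ c ∈ cs, MeasurableSet c := by
    intro c hc
    obtain ⟨a, rfl⟩ := hmem c hc
    exact (hXo.smul a).measurableSet
  have huniq : ∀ {t : G} {c : Set G}, c ∈ cs → t ∈ c → c = t • (X : Set G) := by
    intro t c hc htc
    obtain ⟨a, rfl⟩ := hmem c hc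
    exact (aux_smul_coset_eq_of_mem htc).symm
  have key : ∀ (S : Set G) (f : Set G → ℝ≥0∞), S ⊆ ⋃ a ∈ s, a • (X : Set G) →
      ∀ t, S.indicator (fun _ => f (t • (X : Set G))) t
        = ∑ c ∈ cs, (S ∩ c).indicator (fun _ => f c) t := by
    intro S f hS t
    by_cases htS : t ∈ S
    · rw [Set.indicator_of_mem htS]
      obtain ⟨a, ha, hta⟩ := Set.mem_iUnion₂.1 (hS htS)
      have hc0 : (t • (X : Set G)) ∈ cs := by
        rw [aux_smul_coset_eq_of_mem hta, hcs]
        exact Finset.mem_image_of_mem _ ha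
      rw [Finset.sum_eq_single_of_mem _ hc0]
      · rw [Set.indicator_of_mem
          (Set.mem_inter htS (Set.mem_smul_set.2 ⟨1, one_mem X, by simp⟩))]
      · intro c hc hne
        exact Set.indicator_of_notMem
          (fun hx => hne (huniq hc (Set.mem_of_mem_inter_right hx))) _
    · rw [Set.indicator_of_notMem htS]
      symm
      apply Finset.sum_eq_zero
      intro c hc
      exact Set.indicator_of_notMem (fun hx => htS (Set.mem_of_mem_inter_left hx)) _
  calc ∫⁻ t, A.indicator (fun _ => μ (t • (X : Set G) ∩ D)) t ∂μ
      = ∫⁻ t, ∑ c ∈ cs, (A ∩ c).indicator (fun _ => μ (c ∩ D)) t ∂μ := by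
        exact lintegral_congr (key A (fun c => μ (c ∩ D)) (fun z hz => hs (Or.inl hz)))
    _ = ∑ c ∈ cs, ∫⁻ t, (A ∩ c).indicator (fun _ => μ (c ∩ D)) t ∂μ := by
        refine lintegral_finset_sum _ ?_
        intro c hc
        exact measurable_const.indicator (hAm.inter (hmeasc c hc))
    _ = ∑ c ∈ cs, μ (c ∩ D) * μ (A ∩ c) := by
        refine Finset.sum_congr rfl ?_
        intro c hc
        exact lintegral_indicator_const (hAm.inter (hmeasc c hc)) _
    _ = ∑ c ∈ cs, μ (A ∩ c) * μ (D ∩ c) := by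
        refine Finset.sum_congr rfl ?_
        intro c _
        rw [mul_comm, Set.inter_comm c D]
    _ = ∑ c ∈ cs, ∫⁻ u, (D ∩ c).indicator (fun _ => μ (A ∩ c)) u ∂μ := by
        refine Finset.sum_congr rfl ?_
        intro c hc
        rw [lintegral_indicator_const (hDm.inter (hmeasc c hc))]
    _ = ∫⁻ u, ∑ c ∈ cs, (D ∩ c).indicator (fun _ => μ (A ∩ c)) u ∂μ := by
        refine (lintegral_finset_sum _ ?_).symm
        intro c hc
        exact measurable_const.indicator (hDm.inter (hmeasc c hc))
    _ = ∫⁻ u, D.indicator (fun _ => μ (A ∩ u • (X : Set G))) u ∂μ := by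
        exact (lintegral_congr (key D (fun c => μ (A ∩ c)) (fun z hz => hs (Or.inr hz)))).symm

end SwapLemma

/-- For compact open subgroups `X, Y ⊆ G` and `g, h ∈ G`:
`1_{gY} ⋆ 1_{XhX} = (μ(Y ∩ X)/μ(X ∩ hXh⁻¹)) · (1_{gYX} ⋆ 1_{hX})`. -/
theorem indicator_conv_doubleCoset_indicator {G : Type} [Group G] [TopologicalSpace G]
    [IsTopologicalGroup G] [LocallyCompactSpace G] [T2Space G]
    [MeasurableSpace G] [BorelSpace G]
    (μ : Measure G) [μ.IsHaarMeasure]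
    (H : Subgroup G) (hHo : IsOpen (H : Set G)) (hHc : IsCompact (H : Set G))
    (hμH : μ (H : Set G) = 1)
    (X Y : Subgroup G) (hXo : IsOpen (X : Set G)) (hXc : IsCompact (X : Set G))
    (hYo : IsOpen (Y : Set G)) (hYc : IsCompact (Y : Set G)) (g h : G) :
    mconv μ (({g} * (Y : Set G)).indicator fun _ => (1 : ℝ))
        (((X : Set G) * {h} * (X : Set G)).indicator fun _ => (1 : ℝ)) =
      fun x => ((μ ((Y : Set G) ∩ (X : Set G))).toReal /
          (μ ((X : Set G) ∩ ((fun y => h * y * h⁻¹) '' (X : Set G)))).toReal) *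
        mconv μ (({g} * (Y : Set G) * (X : Set G)).indicator fun _ => (1 : ℝ))
          (({h} * (X : Set G)).indicator fun _ => (1 : ℝ)) x := by
  classical
  -- the conjugate subgroup `Z = h X h⁻¹`
  obtain ⟨Z, hZ⟩ : ∃ Z : Subgroup G, (Z : Set G) = (fun y => h * y * h⁻¹) '' (X : Set G) :=
    ⟨Subgroup.map (MulAut.conj h).toMonoidHom X, by
      rw [Subgroup.coe_map]
      exact Set.image_congr fun y _ => by simp [MulAut.conj_apply]⟩
  have hconj : (fun y => h * y * h⁻¹) =
      ⇑((Homeomorph.mulLeft h).trans (Homeomorph.mulRight h⁻¹)) := by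
    funext y; rfl
  have hZo : IsOpen (Z : Set G) := by
    rw [hZ, hconj, Homeomorph.isOpen_image]; exact hXo
  have hZc : IsCompact (Z : Set G) := by
    rw [hZ, hconj]
    exact hXc.image (Homeomorph.continuous _)
  funext x
  -- names for the sets involved
  set A : Set G := g • (Y : Set G) with hA
  set C : Set G := g • ((Y : Set G) * (X : Set G)) with hC
  set D' : Set G := (x * h⁻¹) • (Z : Set G) with hD'
  set P : Set G := (x * h⁻¹) • ((Z : Set G) * (X : Set G)) with hP
  -- set identifications
  have hXh : (X : Set G) * {h⁻¹} = h⁻¹ • (Z : Set G) := by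
    ext z
    constructor
    · rintro hz
      rw [Set.mem_mul] at hz
      obtain ⟨u, hu, b, hb, hub⟩ := hz
      rw [Set.mem_singleton_iff] at hb
      subst hb
      refine Set.mem_smul_set.2 ⟨h * u * h⁻¹, ?_, ?_⟩
      · rw [hZ]; exact ⟨u, hu, rfl⟩
      · rw [← hub]; simp [smul_eq_mul, mul_assoc]
    · rintro ⟨w, hw, rfl⟩
      rw [hZ] at hw
      obtain ⟨u, hu, rfl⟩ := hw
      show h⁻¹ • (h * u * h⁻¹) ∈ (X : Set G) * {h⁻¹}
      have heq : h⁻¹ • (h * u * h⁻¹) = u * h⁻¹ := by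
        simp only [smul_eq_mul]
        group
      rw [heq]
      exact Set.mul_mem_mul hu (Set.mem_singleton _)
  have hAeq : {g} * (Y : Set G) = A := by rw [hA, aux_singleton_mul]
  have hCeq : {g} * (Y : Set G) * (X : Set G) = C := by
    rw [hC, mul_assoc, aux_singleton_mul]
  have hDeq : x • ({h} * (X : Set G))⁻¹ = D' := by
    rw [mul_inv_rev, Set.inv_singleton, inv_coe_set, hXh, smul_smul, hD']
  have hPeq : x • ((X : Set G) * {h} * (X : Set G))⁻¹ = P := by
    rw [mul_inv_rev, mul_inv_rev, Set.inv_singleton, inv_coe_set,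
      ← mul_assoc, hXh, smul_mul_assoc, smul_smul, hP]
  -- measurability and compactness
  have hAm : MeasurableSet A := ((hYo.smul g)).measurableSet
  have hAc : IsCompact A := hYc.smul g
  have hCo : IsOpen C := ((hYo.mul_right (t := (X : Set G))).smul g)
  have hCm : MeasurableSet C := hCo.measurableSet
  have hCc : IsCompact C := (hYc.mul hXc).smul g
  have hD'm : MeasurableSet D' := (hZo.smul _).measurableSet
  have hD'c : IsCompact D' := hZc.smul _
  have hPm : MeasurableSet P := ((hZo.mul_right (t := (X : Set G))).smul _).measurableSet
  -- the key identity in `ℝ≥0∞`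
  have core : μ ((X : Set G) ∩ (Z : Set G)) * μ (A ∩ P)
      = μ ((Y : Set G) ∩ (X : Set G)) * μ (C ∩ D') := by
    have hP1 : ∀ t : G, μ (t • (X : Set G) ∩ D')
        = P.indicator (fun _ => μ ((X : Set G) ∩ (Z : Set G))) t := fun t =>
      aux_measure_smul_inter_smul (μ := μ) X Z (x * h⁻¹) t
    have hP2 : ∀ u : G, μ (A ∩ u • (X : Set G))
        = C.indicator (fun _ => μ ((Y : Set G) ∩ (X : Set G))) u := by
      intro u
      rw [Set.inter_comm]
      rw [aux_measure_smul_inter_smul (μ := μ) X Y g u,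
        Set.inter_comm (X : Set G) (Y : Set G)]
    calc μ ((X : Set G) ∩ (Z : Set G)) * μ (A ∩ P)
        = ∫⁻ t, (A ∩ P).indicator (fun _ => μ ((X : Set G) ∩ (Z : Set G))) t ∂μ :=
          (lintegral_indicator_const (hAm.inter hPm) _).symm
      _ = ∫⁻ t, A.indicator (fun _ => μ (t • (X : Set G) ∩ D')) t ∂μ := by
          refine lintegral_congr fun t => ?_
          rw [hP1 t]
          by_cases htA : t ∈ A
          · by_cases htP : t ∈ P
            · rw [Set.indicator_of_mem (Set.mem_inter htA htP), Set.indicator_of_mem htP,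
                Set.indicator_of_mem htA]
            · rw [Set.indicator_of_notMem (fun hx => htP (Set.mem_of_mem_inter_right hx)),
                Set.indicator_of_notMem htP, Set.indicator_of_mem htA]
          · rw [Set.indicator_of_notMem (fun hx => htA (Set.mem_of_mem_inter_left hx)),
              Set.indicator_of_notMem htA]
      _ = ∫⁻ u, D'.indicator (fun _ => μ (A ∩ u • (X : Set G))) u ∂μ :=
          aux_lintegral_coset_swap μ X hXo hAc hAm hD'c hD'm
      _ = ∫⁻ u, (D' ∩ C).indicator (fun _ => μ ((Y : Set G) ∩ (X : Set G))) u ∂μ := by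
          refine lintegral_congr fun u => ?_
          rw [hP2 u]
          by_cases huD : u ∈ D'
          · by_cases huC : u ∈ C
            · rw [Set.indicator_of_mem huC, Set.indicator_of_mem huD,
                Set.indicator_of_mem (Set.mem_inter huD huC)]
            · rw [Set.indicator_of_notMem huC, Set.indicator_of_mem huD,
                Set.indicator_of_notMem (fun hx => huC (Set.mem_of_mem_inter_right hx))]
          · rw [Set.indicator_of_notMem huD,
              Set.indicator_of_notMem (fun hx => huD (Set.mem_of_mem_inter_left hx))]
      _ = μ ((Y : Set G) ∩ (X : Set G)) * μ (D' ∩ C) :=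
          lintegral_indicator_const (hD'm.inter hCm) _
      _ = μ ((Y : Set G) ∩ (X : Set G)) * μ (C ∩ D') := by rw [Set.inter_comm D' C]
  -- evaluate both convolutions
  have conv_eq : ∀ (S B : Set G), MeasurableSet (S ∩ x • B⁻¹) →
      mconv μ (S.indicator fun _ => (1 : ℝ)) (B.indicator fun _ => (1 : ℝ)) x
        = (μ (S ∩ x • B⁻¹)).toReal := by
    intro S B hm
    have hfun : (fun t => S.indicator (fun _ => (1 : ℝ)) t
          * B.indicator (fun _ => (1 : ℝ)) (t⁻¹ * x))
        = fun t => (S ∩ x • B⁻¹).indicator (fun _ => (1 : ℝ)) t :=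
      funext fun t => aux_indicator_mul S B x t
    simp only [mconv]
    rw [hfun, integral_indicator_const (1 : ℝ) hm, smul_eq_mul, mul_one, Measure.real]
  have hm1 : MeasurableSet (({g} * (Y : Set G)) ∩ x • ((X : Set G) * {h} * (X : Set G))⁻¹) := by
    rw [hAeq, hPeq]; exact hAm.inter hPm
  have hm2 : MeasurableSet (({g} * (Y : Set G) * (X : Set G)) ∩ x • ({h} * (X : Set G))⁻¹) := by
    rw [hCeq, hDeq]; exact hCm.inter hD'm
  rw [conv_eq _ _ hm1, conv_eq _ _ hm2, hCeq, hAeq, hPeq, hDeq, ← hZ]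
  -- finiteness and positivity
  have hc₂0 : μ ((X : Set G) ∩ (Z : Set G)) ≠ 0 :=
    ((hXo.inter hZo).measure_pos μ ⟨1, one_mem X, by rw [hZ]; exact ⟨1, one_mem X, by simp⟩⟩).ne'
  have hc₂top : μ ((X : Set G) ∩ (Z : Set G)) ≠ ⊤ :=
    ((measure_mono Set.inter_subset_left).trans_lt hXc.measure_lt_top).ne
  have ha : μ (A ∩ P) ≠ ⊤ :=
    ((measure_mono Set.inter_subset_left).trans_lt hAc.measure_lt_top).ne
  have hb : μ (C ∩ D') ≠ ⊤ :=
    ((measure_mono Set.inter_subset_left).trans_lt hCc.measure_lt_top).ne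
  have hkey := congrArg ENNReal.toReal core
  rw [ENNReal.toReal_mul, ENNReal.toReal_mul] at hkey
  have h2 : (μ ((X : Set G) ∩ (Z : Set G))).toReal ≠ 0 :=
    ENNReal.toReal_ne_zero.2 ⟨hc₂0, hc₂top⟩
  rw [div_mul_eq_mul_div, eq_div_iff h2]
  linarith [hkey]
end

section
/- For g, g' ∈ G, only finitely many double cosets of H are contained in the set HgHg'H, and if C ⊆ HgHg'H contains exactly one representative of each such double coset, then 1_{HgH} ⋆ 1_{Hg'H} = Σ_{g''∈C} μ(HgH ∩ g''Hg'⁻¹H)·1_{Hg''H}; moreover μ(HgH ∩ g''Hg'⁻¹H) ≥ 1 for every g'' ∈ HgHg'H. -/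
open MeasureTheory
open scoped Pointwise

section DCAux

variable {G : Type} [Group G] {H : Subgroup G}

private lemma sing_mul (a : G) (t : Set G) : ({a} : Set G) * t = a • t := by
  ext x; simp [Set.mem_mul, Set.mem_smul_set]
  constructor
  · rintro h; exact ⟨a⁻¹*x, h, by group⟩
  · rintro ⟨y, hy, rfl⟩; simpa using hy

private lemma sub_mul_sing {a : G} (ha : a ∈ H) : (H : Set G) * {a} = H := by
  rw [Set.mul_singleton]
  ext x
  simp only [Set.mem_image, SetLike.mem_coe]
  constructor
  · rintro ⟨y, hy, rfl⟩; exact mul_mem hy ha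
  · intro hx; exact ⟨x * a⁻¹, mul_mem hx (inv_mem ha), by group⟩

private lemma sing_mul_sub {a : G} (ha : a ∈ H) : ({a} : Set G) * H = H := by
  rw [sing_mul]; exact smul_coe_set ha

private lemma mem_sing_mul {c x : G} : x ∈ ({c} : Set G) * H ↔ ∃ a ∈ H, c * a = x := by
  simp only [Set.mem_mul, Set.mem_singleton_iff, SetLike.mem_coe]
  constructor
  · rintro ⟨y, rfl, b, hb, rfl⟩; exact ⟨b, hb, rfl⟩
  · rintro ⟨a, ha, rfl⟩; exact ⟨c, rfl, a, ha, rfl⟩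

private lemma mem_mul_sing_mul {s : Set G} {y x : G} :
    x ∈ s * {y} * (H : Set G) ↔ ∃ a ∈ s, ∃ b ∈ H, a * y * b = x := by
  simp only [Set.mem_mul, Set.mem_singleton_iff, SetLike.mem_coe]
  constructor
  · rintro ⟨z, ⟨a, ha, c, rfl, rfl⟩, b, hb, rfl⟩
    exact ⟨a, ha, b, hb, rfl⟩
  · rintro ⟨a, ha, b, hb, rfl⟩
    exact ⟨a * y, ⟨a, ha, y, rfl, rfl⟩, b, hb, rfl⟩

private lemma mem_dc {x y : G} :
    x ∈ (H : Set G) * {y} * H ↔ ∃ a ∈ H, ∃ b ∈ H, a * y * b = x := by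
  rw [mem_mul_sing_mul]; simp only [SetLike.mem_coe]

private lemma mem_S {x g g' : G} :
    x ∈ (H : Set G) * {g} * H * {g'} * H ↔
      ∃ a ∈ H, ∃ b ∈ H, ∃ c ∈ H, a * g * b * g' * c = x := by
  rw [mem_mul_sing_mul]
  constructor
  · rintro ⟨t, ht, c, hc, rfl⟩
    obtain ⟨a, ha, b, hb, rfl⟩ := mem_dc.1 ht
    exact ⟨a, ha, b, hb, c, hc, rfl⟩
  · rintro ⟨a, ha, b, hb, c, hc, rfl⟩
    exact ⟨a * g * b, mem_dc.2 ⟨a, ha, b, hb, rfl⟩, c, hc, rfl⟩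

private lemma mem_T {c z x : G} :
    x ∈ ({c} : Set G) * H * {z} * H ↔ ∃ a ∈ H, ∃ b ∈ H, c * a * z * b = x := by
  rw [mem_mul_sing_mul]
  constructor
  · rintro ⟨t, ht, b, hb, rfl⟩
    obtain ⟨a, ha, rfl⟩ := mem_sing_mul.1 ht
    exact ⟨a, ha, b, hb, rfl⟩
  · rintro ⟨a, ha, b, hb, rfl⟩
    exact ⟨c * a, mem_sing_mul.2 ⟨a, ha, rfl⟩, b, hb, rfl⟩

private lemma dc_mem_self (x : G) : x ∈ (H : Set G) * {x} * H :=
  mem_dc.2 ⟨1, one_mem _, 1, one_mem _, by group⟩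

private lemma dc_eq {x y : G} (h : y ∈ (H : Set G) * {x} * H) :
    (H : Set G) * {y} * H = (H : Set G) * {x} * H := by
  obtain ⟨a, ha, b, hb, rfl⟩ := mem_dc.1 h
  have : ({a * x * b} : Set G) = {a} * {x} * {b} := by
    simp [Set.singleton_mul_singleton]
  rw [this, show (H : Set G) * ({a} * {x} * {b}) * (H : Set G)
      = ((H : Set G) * {a}) * {x} * ({b} * (H : Set G)) by simp only [mul_assoc],
    sub_mul_sing ha, sing_mul_sub hb]

private lemma dc_symm {x y : G} (h : y ∈ (H : Set G) * {x} * H) :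
    x ∈ (H : Set G) * {y} * H := by
  rw [dc_eq h]; exact dc_mem_self x

end DCAux

/-- For `g, g' ∈ G`, only finitely many double cosets of `H` are contained in `HgHg'H`; if
`C ⊆ HgHg'H` is a finite set containing exactly one representative of each such double coset,
then `1_{HgH} ⋆ 1_{Hg'H} = Σ_{g''∈C} μ(HgH ∩ g''Hg'⁻¹H)·1_{Hg''H}`; moreover
`μ(HgH ∩ g''Hg'⁻¹H) ≥ 1` for every `g'' ∈ HgHg'H`. -/
theorem doubleCoset_conv_doubleCoset {G : Type} [Group G] [TopologicalSpace G]
    [IsTopologicalGroup G] [LocallyCompactSpace G] [T2Space G]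
    [MeasurableSpace G] [BorelSpace G]
    (μ : Measure G) [μ.IsHaarMeasure]
    (H : Subgroup G) (hHo : IsOpen (H : Set G)) (hHc : IsCompact (H : Set G))
    (hμH : μ (H : Set G) = 1) (g g' : G) :
    -- only finitely many double cosets of `H` are contained in `HgHg'H`
    ((fun x => (H : Set G) * {x} * (H : Set G)) ''
        ((H : Set G) * {g} * (H : Set G) * {g'} * (H : Set G))).Finite ∧
    -- the convolution formula, for any set `C` of representatives of these double cosets
    (∀ C : Finset G,
        (C : Set G) ⊆ (H : Set G) * {g} * (H : Set G) * {g'} * (H : Set G) →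
        (∀ x ∈ (H : Set G) * {g} * (H : Set G) * {g'} * (H : Set G),
          ∃! c, c ∈ C ∧ c ∈ (H : Set G) * {x} * (H : Set G)) →
        mconv μ (((H : Set G) * {g} * (H : Set G)).indicator fun _ => (1 : ℝ))
            (((H : Set G) * {g'} * (H : Set G)).indicator fun _ => (1 : ℝ)) =
          fun x => ∑ c ∈ C,
            (μ (((H : Set G) * {g} * (H : Set G)) ∩
                ({c} * (H : Set G) * {g'⁻¹} * (H : Set G)))).toReal *
              ((H : Set G) * {c} * (H : Set G)).indicator (fun _ => (1 : ℝ)) x) ∧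
    -- positivity of the coefficients
    (∀ g'' ∈ (H : Set G) * {g} * (H : Set G) * {g'} * (H : Set G),
        1 ≤ μ (((H : Set G) * {g} * (H : Set G)) ∩
          ({g''} * (H : Set G) * {g'⁻¹} * (H : Set G)))) := by
  set A : Set G := (H : Set G) * {g} * (H : Set G) with hA
  set B : Set G := (H : Set G) * {g'} * (H : Set G) with hB
  set S : Set G := (H : Set G) * {g} * (H : Set G) * {g'} * (H : Set G) with hS
  set T : G → Set G := fun x => {x} * (H : Set G) * {g'⁻¹} * (H : Set G) with hT
  -- basic topology
  have hAopen : IsOpen A := hHo.mul_left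
  have hTopen : ∀ x, IsOpen (T x) := fun x => hHo.mul_left
  have hScompact : IsCompact S :=
    ((((hHc.mul isCompact_singleton).mul hHc).mul isCompact_singleton).mul hHc)
  have hdcopen : ∀ x : G, IsOpen ((H : Set G) * {x} * (H : Set G)) := fun x => hHo.mul_left
  -- membership in T
  have memT : ∀ c x : G, x ∈ T c ↔ ∃ a ∈ H, ∃ b ∈ H, c * a * g'⁻¹ * b = x :=
    fun c x => mem_T
  -- the key pointwise fact : t⁻¹ * x ∈ B ↔ t ∈ T x
  have key : ∀ t x : G, t⁻¹ * x ∈ B ↔ t ∈ T x := by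
    intro t x
    rw [hB, mem_dc, memT]
    constructor
    · rintro ⟨a, ha, b, hb, h⟩
      refine ⟨b⁻¹, inv_mem hb, a⁻¹, inv_mem ha, ?_⟩
      have : t = x * (a * g' * b)⁻¹ := by
        rw [h]; group
      rw [this]; group
    · rintro ⟨a, ha, b, hb, rfl⟩
      refine ⟨b⁻¹, inv_mem hb, a⁻¹, inv_mem ha, ?_⟩
      group
  -- the convolution equals μ (A ∩ T x)
  have conv_eq : ∀ x : G,
      mconv μ (A.indicator fun _ => (1:ℝ)) (B.indicator fun _ => (1:ℝ)) x
        = (μ (A ∩ T x)).toReal := by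
    intro x
    have : (fun t => A.indicator (fun _ => (1:ℝ)) t * B.indicator (fun _ => (1:ℝ)) (t⁻¹ * x))
        = (A ∩ T x).indicator (fun _ => (1:ℝ)) := by
      funext t
      have hkey := key t x
      by_cases h1 : t ∈ A <;> by_cases h2 : t ∈ T x <;>
        simp [Set.indicator_apply, h1, h2, hkey]
    rw [mconv, this]
    exact integral_indicator_one (hAopen.inter (hTopen x)).measurableSet
  -- invariance of x ↦ μ (A ∩ T x) on double cosets
  have Finv : ∀ x y : G, y ∈ (H : Set G) * {x} * H → μ (A ∩ T y) = μ (A ∩ T x) := by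
    intro x y hy
    obtain ⟨a, ha, b, hb, rfl⟩ := mem_dc.1 hy
    have hTy : T (a * x * b) = a • T x := by
      ext y
      constructor
      · intro hy'
        obtain ⟨p, hp, q, hq, rfl⟩ := (memT _ _).1 hy'
        exact ⟨x * (b * p) * g'⁻¹ * q, (memT _ _).2 ⟨b * p, mul_mem hb hp, q, hq, rfl⟩,
          by simp only [smul_eq_mul]; group⟩
      · rintro ⟨z, hz, rfl⟩
        obtain ⟨p, hp, q, hq, rfl⟩ := (memT _ _).1 hz
        exact (memT _ _).2 ⟨b⁻¹ * p, mul_mem (inv_mem hb) hp, q, hq,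
          by simp only [smul_eq_mul]; group⟩
    have hAy : a • A = A := by
      ext y
      constructor
      · rintro ⟨z, hz, rfl⟩
        obtain ⟨p, hp, q, hq, rfl⟩ := mem_dc.1 hz
        exact mem_dc.2 ⟨a * p, mul_mem ha hp, q, hq, by simp only [smul_eq_mul]; group⟩
      · intro hy'
        obtain ⟨p, hp, q, hq, rfl⟩ := mem_dc.1 hy'
        exact ⟨a⁻¹ * p * g * q, mem_dc.2 ⟨a⁻¹ * p, mul_mem (inv_mem ha) hp, q, hq, rfl⟩,
          by simp only [smul_eq_mul]; group⟩
    rw [hTy]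
    conv_lhs => rw [← hAy]
    rw [← Set.smul_set_inter, measure_smul]
  -- support : μ (A ∩ T x) ≠ 0 → x ∈ S
  have Fsupp : ∀ x : G, x ∉ S → A ∩ T x = ∅ := by
    intro x hx
    rw [Set.eq_empty_iff_forall_notMem]
    rintro t ⟨htA, htT⟩
    obtain ⟨a, ha, b, hb, rfl⟩ := mem_dc.1 htA
    obtain ⟨c, hc, d, hd, h⟩ := (memT x _).1 htT
    apply hx
    rw [hS]
    refine mem_S.2 ⟨a, ha, b * d⁻¹, mul_mem hb (inv_mem hd), c⁻¹, inv_mem hc, ?_⟩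
    have hx' : x = a * g * b * d⁻¹ * g' * c⁻¹ := by rw [← h]; group
    rw [hx']; group
  -- double cosets of elements of S lie in S
  have dc_sub_S : ∀ c ∈ S, (H : Set G) * {c} * (H : Set G) ⊆ S := by
    intro c hc
    obtain ⟨a, ha, b, hb, d, hd, rfl⟩ := mem_S.1 hc
    intro y hy
    obtain ⟨p, hp, q, hq, rfl⟩ := mem_dc.1 hy
    exact mem_S.2 ⟨p * a, mul_mem hp ha, b, hb, d * q, mul_mem hd hq, by group⟩
  refine ⟨?_, ?_, ?_⟩
  · -- finiteness
    have hcover : S ⊆ ⋃ x : S, (H : Set G) * {(x : G)} * (H : Set G) := by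
      intro y hy
      exact Set.mem_iUnion.2 ⟨⟨y, hy⟩, dc_mem_self y⟩
    obtain ⟨t, ht⟩ := hScompact.elim_finite_subcover
      (fun x : S => (H : Set G) * {(x : G)} * (H : Set G)) (fun x => hdcopen _) hcover
    apply Set.Finite.subset (Set.Finite.image (fun x : S => (H : Set G) * {(x : G)} * (H : Set G))
      t.finite_toSet)
    rintro _ ⟨y, hy, rfl⟩
    obtain ⟨i, hit, hyi⟩ := Set.mem_iUnion₂.1 (ht hy)
    exact ⟨i, hit, (dc_eq hyi).symm⟩
  · -- convolution formula
    intro C hCsub hCuniq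
    funext x
    show mconv μ (A.indicator fun _ => (1 : ℝ)) (B.indicator fun _ => (1 : ℝ)) x
        = ∑ c ∈ C, (μ (A ∩ T c)).toReal *
            ((H : Set G) * {c} * (H : Set G)).indicator (fun _ => (1 : ℝ)) x
    by_cases hx : x ∈ S
    · obtain ⟨c, ⟨hcC, hcx⟩, hcu⟩ := hCuniq x hx
      have hxc : x ∈ (H : Set G) * {c} * (H : Set G) := dc_symm hcx
      rw [conv_eq x]
      rw [Finset.sum_eq_single c]
      · rw [Set.indicator_of_mem hxc, mul_one, Finv c x hxc]
      · intro c' hc'C hc'ne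
        have : x ∉ (H : Set G) * {c'} * (H : Set G) := by
          intro hmem
          exact hc'ne (hcu c' ⟨hc'C, dc_symm hmem⟩)
        rw [Set.indicator_of_notMem this, mul_zero]
      · intro hc; exact absurd hcC hc
    · rw [conv_eq x, Fsupp x hx, measure_empty, ENNReal.toReal_zero]
      symm
      apply Finset.sum_eq_zero
      intro c hcC
      have : x ∉ (H : Set G) * {c} * (H : Set G) := fun hmem => hx (dc_sub_S c (hCsub hcC) hmem)
      rw [Set.indicator_of_notMem this, mul_zero]
  · -- positivity
    intro g'' hg''
    obtain ⟨a, ha, b, hb, c, hc, rfl⟩ := mem_S.1 hg''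
    show 1 ≤ μ (A ∩ T (a * g * b * g' * c))
    have hsub : (a * g * b) • (H : Set G) ⊆ A ∩ T (a * g * b * g' * c) := by
      rintro y ⟨h, hh, rfl⟩
      constructor
      · exact mem_dc.2 ⟨a, ha, b * h, mul_mem hb hh, by simp only [smul_eq_mul]; group⟩
      · exact (memT _ _).2 ⟨c⁻¹, inv_mem hc, h, hh, by simp only [smul_eq_mul]; group⟩
    calc (1 : ENNReal) = μ ((a * g * b) • (H : Set G)) := by rw [measure_smul, hμH]
      _ ≤ _ := measure_mono hsub
end

section
/- Assume in addition that G is unimodular (μ is also right invariant). Then for all g, g' ∈ G one has ∫_G (1_{HgH} ⋆ 1_{Hg'H}) dμ = μ(HgH)·μ(Hg'H). Moreover, for g ∈ G the following are equivalent: (a) there exists a compactly supported, left and right H-invariant, integer-valued function f on G with 1_{HgH} ⋆ f = f ⋆ 1_{HgH} = 1_H; (b) μ(HgH) = 1; (c) gHg⁻¹ = H, i.e. g lies in the normalizer of H in G. -/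
open MeasureTheory
open scoped Pointwise

section Helpers

variable {G : Type} [Group G]

/-- membership in a double coset -/
lemma mem_HgH_iff {H : Subgroup G} {g x : G} :
    x ∈ (H : Set G) * {g} * (H : Set G) ↔ ∃ h₁ ∈ H, ∃ h₂ ∈ H, x = h₁ * g * h₂ := by
  constructor
  · rintro ⟨y, ⟨h₁, hh₁, g', hg', rfl⟩, h₂, hh₂, rfl⟩
    exact ⟨h₁, hh₁, h₂, hh₂, by simp_all⟩
  · rintro ⟨h₁, hh₁, h₂, hh₂, rfl⟩
    exact ⟨h₁ * g, ⟨h₁, hh₁, g, rfl, rfl⟩, h₂, hh₂, rfl⟩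

lemma coset_eq_of {H : Subgroup G} {a b : G} (hab : b⁻¹ * a ∈ H) :
    a • (H : Set G) = b • (H : Set G) := by
  ext x
  simp only [Set.mem_smul_set_iff_inv_smul_mem, smul_eq_mul, SetLike.mem_coe]
  constructor
  · intro hx
    have : b⁻¹ * x = (b⁻¹ * a) * (a⁻¹ * x) := by group
    rw [this]; exact mul_mem hab hx
  · intro hx
    have : a⁻¹ * x = (b⁻¹ * a)⁻¹ * (b⁻¹ * x) := by group
    rw [this]; exact mul_mem (inv_mem hab) hx

lemma coset_disjoint {H : Subgroup G} {a b : G} (hab : ¬ (b⁻¹ * a ∈ H)) :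
    Disjoint (a • (H : Set G)) (b • (H : Set G)) := by
  rw [Set.disjoint_left]
  rintro x hxa hxb
  rw [Set.mem_smul_set_iff_inv_smul_mem, smul_eq_mul, SetLike.mem_coe] at hxa hxb
  exact hab (by
    have : b⁻¹ * a = (b⁻¹ * x) * (a⁻¹ * x)⁻¹ := by group
    rw [this]; exact mul_mem hxb (inv_mem hxa))

variable [TopologicalSpace G] [IsTopologicalGroup G]

/-- decomposition of a compact, right-H-stable open-coset-union set into disjoint left cosets -/
lemma exists_coset_decomp (H : Subgroup G) (hHo : IsOpen (H : Set G))
    {A : Set G} (hAc : IsCompact A) (hst : ∀ x ∈ A, ∀ h ∈ H, x * h ∈ A) :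
    ∃ s : Finset G, A = ⋃ a ∈ s, a • (H : Set G) ∧
      (s : Set G).PairwiseDisjoint (fun a => a • (H : Set G)) := by
  classical
  obtain ⟨t, ht⟩ := hAc.elim_finite_subcover
      (fun a : G => if a ∈ A then a • (H : Set G) else ∅)
      (fun a => by by_cases h : a ∈ A <;> simp [h, hHo.smul a])
      (fun x hx => Set.mem_iUnion.2 ⟨x, by
        simp only [if_pos hx]
        exact ⟨1, H.one_mem, mul_one x⟩⟩)
  set t' : Finset G := t.filter (· ∈ A) with ht'
  have hcov : A = ⋃ a ∈ t', a • (H : Set G) := by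
    apply Set.Subset.antisymm
    · intro x hx
      obtain ⟨a, ha, hxa⟩ := Set.mem_iUnion₂.1 (ht hx)
      by_cases haA : a ∈ A
      · rw [if_pos haA] at hxa
        exact Set.mem_iUnion₂.2 ⟨a, Finset.mem_filter.2 ⟨ha, haA⟩, hxa⟩
      · rw [if_neg haA] at hxa; exact absurd hxa (Set.notMem_empty x)
    · intro x hx
      obtain ⟨a, ha, hxa⟩ := Set.mem_iUnion₂.1 hx
      obtain ⟨h, hh, rfl⟩ := hxa
      exact hst a (Finset.mem_filter.1 ha).2 h hh
  -- pass to representatives via the quotient to get disjointness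
  set s : Finset G := t'.image (fun a => (Quotient.out (QuotientGroup.mk (s := H) a) : G)) with hs
  have hout : ∀ a : G, (Quotient.out (QuotientGroup.mk (s := H) a) : G) • (H : Set G)
      = a • (H : Set G) := by
    intro a
    apply coset_eq_of
    have : QuotientGroup.mk (s := H) (Quotient.out (QuotientGroup.mk (s := H) a)) =
        QuotientGroup.mk (s := H) a := Quotient.out_eq' _
    exact (QuotientGroup.eq (s := H)).1 this.symm
  refine ⟨s, ?_, ?_⟩
  · rw [hcov]
    apply Set.Subset.antisymm
    · intro x hx
      obtain ⟨a, ha, hxa⟩ := Set.mem_iUnion₂.1 hx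
      exact Set.mem_iUnion₂.2 ⟨_, Finset.mem_image_of_mem _ ha, by rw [hout a]; exact hxa⟩
    · intro x hx
      obtain ⟨b, hb, hxb⟩ := Set.mem_iUnion₂.1 hx
      obtain ⟨a, ha, rfl⟩ := Finset.mem_image.1 hb
      exact Set.mem_iUnion₂.2 ⟨a, ha, by rwa [hout a] at hxb⟩
  · intro a ha b hb hab
    simp only [hs, Finset.coe_image, Set.mem_image, Finset.mem_coe] at ha hb
    obtain ⟨a₀, _, rfl⟩ := ha
    obtain ⟨b₀, _, rfl⟩ := hb
    apply coset_disjoint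
    intro hmem
    apply hab
    have h1 : QuotientGroup.mk (s := H) (Quotient.out (QuotientGroup.mk (s := H) b₀)) =
        QuotientGroup.mk (s := H) (Quotient.out (QuotientGroup.mk (s := H) a₀)) :=
      (QuotientGroup.eq (s := H)).2 hmem
    have h3 : (QuotientGroup.mk (s := H) b₀) = QuotientGroup.mk (s := H) a₀ :=
      (Quotient.out_eq' _).symm.trans (h1.trans (Quotient.out_eq' _))
    exact congrArg Quotient.out h3.symm

end Helpers

section Measure

variable {G : Type} [Group G] [TopologicalSpace G] [IsTopologicalGroup G]
  [MeasurableSpace G] [BorelSpace G]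
  (μ : Measure G) [μ.IsMulLeftInvariant]
  (H : Subgroup G) (hHo : IsOpen (H : Set G)) (hμH : μ (H : Set G) = 1)

include hHo hμH

set_option linter.unusedSectionVars false in
omit hHo hμH in
/-- pointwise rewrite of the convolution integrand over a single coset -/
lemma integrand_eq (a : G) {f : G → ℝ} (hf : ∀ h ∈ H, ∀ x : G, f (h * x) = f x) (x : G) :
    (fun y => (a • (H : Set G)).indicator (fun _ => (1 : ℝ)) y * f (y⁻¹ * x))
      = (a • (H : Set G)).indicator (fun _ => f (a⁻¹ * x)) := by
  funext y
  by_cases hy : y ∈ a • (H : Set G)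
  · rw [Set.indicator_of_mem hy, Set.indicator_of_mem hy, one_mul]
    obtain ⟨h, hh, rfl⟩ := hy
    have he : ((a • h)⁻¹ * x) = h⁻¹ * (a⁻¹ * x) := by simp [smul_eq_mul]; group
    rw [he, hf h⁻¹ (inv_mem hh)]
  · rw [Set.indicator_of_notMem hy, Set.indicator_of_notMem hy, zero_mul]

/-- the convolution of a single coset indicator with a left-`H`-invariant function -/
lemma mconv_coset (a : G) {f : G → ℝ} (hf : ∀ h ∈ H, ∀ x : G, f (h * x) = f x) (x : G) :
    mconv μ ((a • (H : Set G)).indicator fun _ => (1 : ℝ)) f x = f (a⁻¹ * x) := by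
  have hm : MeasurableSet (a • (H : Set G)) := (hHo.smul a).measurableSet
  rw [show mconv μ ((a • (H : Set G)).indicator fun _ => (1 : ℝ)) f x
      = ∫ y, (a • (H : Set G)).indicator (fun _ => (1 : ℝ)) y * f (y⁻¹ * x) ∂μ from rfl,
    integrand_eq H a hf x, integral_indicator_const _ hm, measureReal_def, measure_smul, hμH]
  simp

/-- the key integral identity for convolution with a compact, right-`H`-stable set -/
lemma key_integral {A : Set G} (hAc : IsCompact A)
    (hst : ∀ x ∈ A, ∀ h ∈ H, x * h ∈ A)
    {f : G → ℝ} (hfi : Integrable f μ) (hf : ∀ h ∈ H, ∀ x : G, f (h * x) = f x) :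
    ∫ x, mconv μ (A.indicator fun _ => (1 : ℝ)) f x ∂μ = (μ A).toReal * ∫ x, f x ∂μ := by
  classical
  obtain ⟨s, hA, hdisj⟩ := exists_coset_decomp H hHo hAc hst
  have hm : ∀ a : G, MeasurableSet (a • (H : Set G)) := fun a => (hHo.smul a).measurableSet
  have hμA : μ A = s.card := by
    rw [hA, measure_biUnion_finset hdisj (fun a _ => hm a)]
    simp [measure_smul, hμH]
  -- indicator of A as a sum of coset indicators
  have hind : ∀ y : G, A.indicator (fun _ => (1 : ℝ)) y
      = ∑ a ∈ s, (a • (H : Set G)).indicator (fun _ => (1 : ℝ)) y := by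
    intro y
    by_cases hy : y ∈ A
    · rw [Set.indicator_of_mem hy]
      obtain ⟨a₀, ha₀, hya⟩ := Set.mem_iUnion₂.1 (hA ▸ hy)
      rw [Finset.sum_eq_single a₀]
      · rw [Set.indicator_of_mem hya]
      · intro b hb hba
        refine Set.indicator_of_notMem (fun hyb => ?_) _
        exact Set.disjoint_left.1 (hdisj hb ha₀ hba) hyb hya
      · intro h; exact absurd ha₀ h
    · rw [Set.indicator_of_notMem hy]
      refine (Finset.sum_eq_zero fun a ha => ?_).symm
      refine Set.indicator_of_notMem (fun hya => hy ?_) _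
      exact hA ▸ Set.mem_iUnion₂.2 ⟨a, ha, hya⟩
  have hmconv : ∀ x : G, mconv μ (A.indicator fun _ => (1 : ℝ)) f x
      = ∑ a ∈ s, f (a⁻¹ * x) := by
    intro x
    have : (fun y => A.indicator (fun _ => (1 : ℝ)) y * f (y⁻¹ * x))
        = fun y => ∑ a ∈ s, (a • (H : Set G)).indicator (fun _ => f (a⁻¹ * x)) y := by
      funext y
      rw [hind y, Finset.sum_mul]
      exact Finset.sum_congr rfl fun a _ => congrFun (integrand_eq H a hf x) y
    rw [show mconv μ (A.indicator fun _ => (1 : ℝ)) f x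
        = ∫ y, A.indicator (fun _ => (1 : ℝ)) y * f (y⁻¹ * x) ∂μ from rfl, this,
      integral_finset_sum]
    · refine Finset.sum_congr rfl fun a _ => ?_
      rw [integral_indicator_const _ (hm a), measureReal_def, measure_smul, hμH]
      simp
    · intro a _
      rw [integrable_indicator_iff (hm a)]
      exact (integrableOn_const_iff).2 (Or.inr (by rw [measure_smul, hμH]; norm_num))
  calc ∫ x, mconv μ (A.indicator fun _ => (1 : ℝ)) f x ∂μ
      = ∫ x, ∑ a ∈ s, f (a⁻¹ * x) ∂μ := by
        exact integral_congr_ae (Filter.Eventually.of_forall hmconv)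
    _ = ∑ a ∈ s, ∫ x, f (a⁻¹ * x) ∂μ :=
        integral_finset_sum _ fun a _ => hfi.comp_mul_left a⁻¹
    _ = ∑ a ∈ s, ∫ x, f x ∂μ :=
        Finset.sum_congr rfl fun a _ => integral_mul_left_eq_self f a⁻¹
    _ = (μ A).toReal * ∫ x, f x ∂μ := by
        rw [Finset.sum_const, hμA]
        simp [nsmul_eq_mul]

/-- a compactly supported, right-`H`-invariant, integer-valued function has integer integral -/
lemma integral_int (s : Finset G) :
    ∀ f : G → ℝ, Integrable f μ → (∀ h ∈ H, ∀ x : G, f (x * h) = f x) →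
    (∀ x : G, ∃ n : ℤ, f x = (n : ℝ)) →
    Function.support f ⊆ ⋃ a ∈ s, a • (H : Set G) → ∃ n : ℤ, ∫ x, f x ∂μ = (n : ℝ) := by
  classical
  induction s using Finset.induction_on with
  | empty =>
    intro f _ _ _ hsupp
    refine ⟨0, ?_⟩
    have : f = 0 := by
      funext x
      by_contra hx
      simpa using hsupp (Function.mem_support.2 hx)
    simp [this]
  | @insert a s ha ih =>
    intro f hfi hfr hfz hsupp
    have hm : MeasurableSet (a • (H : Set G)) := (hHo.smul a).measurableSet
    set f₁ : G → ℝ := (a • (H : Set G)).indicator (fun _ => f a) with hf₁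
    have hconst : ∀ y ∈ a • (H : Set G), f y = f a := by
      rintro y ⟨h, hh, rfl⟩
      exact hfr h hh a
    have hf₁i : Integrable f₁ μ := by
      rw [hf₁, integrable_indicator_iff hm]
      exact (integrableOn_const_iff).2 (Or.inr (by rw [measure_smul, hμH]; norm_num))
    have hcosetr : ∀ (x : G), ∀ h ∈ H, (x * h ∈ a • (H : Set G) ↔ x ∈ a • (H : Set G)) := by
      intro x h hh
      constructor
      · rintro ⟨h', hh', he⟩
        exact ⟨h' * h⁻¹, mul_mem hh' (inv_mem hh), by
          simp only [smul_eq_mul] at he ⊢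
          rw [← mul_assoc, he, mul_assoc, mul_inv_cancel, mul_one]⟩
      · rintro ⟨h', hh', rfl⟩
        exact ⟨h' * h, mul_mem hh' hh, by simp [smul_eq_mul, mul_assoc]⟩
    obtain ⟨n₁, hn₁⟩ : ∃ n : ℤ, ∫ x, (f - f₁) x ∂μ = (n : ℝ) := by
      apply ih (f - f₁) (hfi.sub hf₁i)
      · intro h hh x
        simp only [Pi.sub_apply, hfr h hh x]
        congr 1
        by_cases hx : x ∈ a • (H : Set G)
        · rw [hf₁]
          rw [Set.indicator_of_mem hx, Set.indicator_of_mem (((hcosetr x h hh)).2 hx)]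
        · rw [hf₁, Set.indicator_of_notMem hx,
            Set.indicator_of_notMem (fun hc => hx ((hcosetr x h hh).1 hc))]
      · intro x
        obtain ⟨n, hn⟩ := hfz x
        by_cases hx : x ∈ a • (H : Set G)
        · obtain ⟨m, hm'⟩ := hfz a
          exact ⟨n - m, by simp [hf₁, Set.indicator_of_mem hx, hn, hm']⟩
        · exact ⟨n, by simp [hf₁, Set.indicator_of_notMem hx, hn]⟩
      · intro x hx
        simp only [Function.mem_support, Pi.sub_apply] at hx
        by_cases hxa : x ∈ a • (H : Set G)
        · exact absurd (by rw [hconst x hxa, hf₁, Set.indicator_of_mem hxa, sub_self]) hx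
        · have hfx : f x ≠ 0 := by
            rwa [hf₁, Set.indicator_of_notMem hxa, sub_zero] at hx
          have := hsupp (Function.mem_support.2 hfx)
          rw [Set.mem_iUnion₂] at this
          obtain ⟨b, hb, hxb⟩ := this
          rcases Finset.mem_insert.1 hb with rfl | hbs
          · exact absurd hxb hxa
          · exact Set.mem_iUnion₂.2 ⟨b, hbs, hxb⟩
    obtain ⟨m, hma⟩ := hfz a
    refine ⟨n₁ + m, ?_⟩
    have : ∫ x, f x ∂μ = ∫ x, (f - f₁) x ∂μ + ∫ x, f₁ x ∂μ := by
      rw [← integral_add (hfi.sub hf₁i) hf₁i]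
      simp
    rw [this, hn₁, hf₁, integral_indicator_const _ hm, measureReal_def, measure_smul, hμH, hma]
    simp

end Measure
/-- Assume `G` is unimodular. Then `∫_G (1_{HgH} ⋆ 1_{Hg'H}) dμ = μ(HgH)·μ(Hg'H)` for all
`g, g' ∈ G`; moreover for `g ∈ G` the following are equivalent: (a) `1_{HgH}` has a two-sided
convolution inverse that is a compactly supported, left and right `H`-invariant,
integer-valued function; (b) `μ(HgH) = 1`; (c) `gHg⁻¹ = H`. -/
theorem integral_conv_and_unit_iff {G : Type} [Group G] [TopologicalSpace G]
    [IsTopologicalGroup G] [LocallyCompactSpace G] [T2Space G]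
    [MeasurableSpace G] [BorelSpace G]
    (μ : Measure G) [μ.IsHaarMeasure] [μ.IsMulRightInvariant]
    (H : Subgroup G) (hHo : IsOpen (H : Set G)) (hHc : IsCompact (H : Set G))
    (hμH : μ (H : Set G) = 1) :
    (∀ g g' : G,
        ∫ x, mconv μ (((H : Set G) * {g} * (H : Set G)).indicator fun _ => (1 : ℝ))
            (((H : Set G) * {g'} * (H : Set G)).indicator fun _ => (1 : ℝ)) x ∂μ =
          (μ ((H : Set G) * {g} * (H : Set G))).toReal *
            (μ ((H : Set G) * {g'} * (H : Set G))).toReal) ∧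
    (∀ g : G,
      ((∃ f : G → ℝ, HasCompactSupport f ∧
          (∀ h ∈ H, ∀ x : G, f (h * x) = f x) ∧
          (∀ h ∈ H, ∀ x : G, f (x * h) = f x) ∧
          (∀ x : G, ∃ n : ℤ, f x = (n : ℝ)) ∧
          mconv μ (((H : Set G) * {g} * (H : Set G)).indicator fun _ => (1 : ℝ)) f =
            (H : Set G).indicator (fun _ => (1 : ℝ)) ∧
          mconv μ f (((H : Set G) * {g} * (H : Set G)).indicator fun _ => (1 : ℝ)) =
            (H : Set G).indicator (fun _ => (1 : ℝ))) ↔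
        μ ((H : Set G) * {g} * (H : Set G)) = 1) ∧
      (μ ((H : Set G) * {g} * (H : Set G)) = 1 ↔
        (fun x => g * x * g⁻¹) '' (H : Set G) = (H : Set G))) := by
  classical
  set A : G → Set G := fun g => (H : Set G) * {g} * (H : Set G) with hA
  have hAo : ∀ g, IsOpen (A g) := fun g => hHo.mul_left
  have hAm : ∀ g, MeasurableSet (A g) := fun g => (hAo g).measurableSet
  have hAc : ∀ g, IsCompact (A g) := fun g => (hHc.mul isCompact_singleton).mul hHc
  have hst : ∀ g, ∀ x ∈ A g, ∀ h ∈ H, x * h ∈ A g := by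
    intro g x hx h hh
    obtain ⟨h₁, hh₁, h₂, hh₂, rfl⟩ := mem_HgH_iff.1 hx
    exact mem_HgH_iff.2 ⟨h₁, hh₁, h₂ * h, mul_mem hh₂ hh, by group⟩
  have hstl : ∀ g, ∀ x ∈ A g, ∀ h ∈ H, h * x ∈ A g := by
    intro g x hx h hh
    obtain ⟨h₁, hh₁, h₂, hh₂, rfl⟩ := mem_HgH_iff.1 hx
    exact mem_HgH_iff.2 ⟨h * h₁, mul_mem hh hh₁, h₂, hh₂, by group⟩
  have hlinv : ∀ g, ∀ h ∈ H, ∀ x : G, (h * x ∈ A g ↔ x ∈ A g) := by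
    intro g h hh x
    constructor
    · intro hx
      have := hstl g _ hx h⁻¹ (inv_mem hh)
      rwa [← mul_assoc, inv_mul_cancel, one_mul] at this
    · exact fun hx => hstl g x hx h hh
  have hgsub : ∀ g, g • (H : Set G) ⊆ A g := by
    rintro g x ⟨h, hh, rfl⟩
    exact mem_HgH_iff.2 ⟨1, H.one_mem, h, hh, by simp [smul_eq_mul]⟩
  -- indicator of A g' is left H-invariant and integrable
  have hindl : ∀ g' : G, ∀ h ∈ H, ∀ x : G,
      (A g').indicator (fun _ => (1 : ℝ)) (h * x) = (A g').indicator (fun _ => (1 : ℝ)) x := by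
    intro g' h hh x
    by_cases hx : x ∈ A g'
    · rw [Set.indicator_of_mem hx, Set.indicator_of_mem ((hlinv g' h hh x).2 hx)]
    · rw [Set.indicator_of_notMem hx,
        Set.indicator_of_notMem (fun hc => hx ((hlinv g' h hh x).1 hc))]
  have hindint : ∀ g' : G, Integrable ((A g').indicator fun _ => (1 : ℝ)) μ := by
    intro g'
    rw [integrable_indicator_iff (hAm g')]
    exact (integrableOn_const_iff).2 (Or.inr (hAc g').measure_lt_top)
  constructor
  · -- part 1
    intro g g'
    rw [key_integral μ H hHo hμH (hAc g) (hst g) (hindint g') (hindl g')]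
    rw [integral_indicator_const _ (hAm g'), measureReal_def, smul_eq_mul, mul_one]
  · intro g
    -- (b) → (c)
    have hbc : μ (A g) = 1 → (fun x => g * x * g⁻¹) '' (H : Set G) = (H : Set G) := by
      intro hb
      -- A g ⊆ g • H
      have hsub1 : A g ⊆ g • (H : Set G) := by
        intro x hx
        by_contra hxg
        have hd : Disjoint (x • (H : Set G)) (g • (H : Set G)) := by
          apply coset_disjoint
          intro hmem
          exact hxg ⟨g⁻¹ * x, hmem, by simp [smul_eq_mul]⟩
        have hx1 : x • (H : Set G) ⊆ A g := by
          rintro y ⟨h, hh, rfl⟩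
          exact hst g x hx h hh
        have h2 : (2 : ENNReal) ≤ μ (A g) := by
          calc (2 : ENNReal) = μ (x • (H : Set G)) + μ (g • (H : Set G)) := by
                rw [measure_smul, measure_smul, hμH]; norm_num
            _ = μ (x • (H : Set G) ∪ g • (H : Set G)) :=
                (measure_union hd ((hHo.smul g).measurableSet)).symm
            _ ≤ μ (A g) := measure_mono (Set.union_subset hx1 (hgsub g))
        rw [hb] at h2
        norm_num at h2
      -- A g ⊆ H * {g}
      have hRmem : ∀ x y : G, (y ∈ (H : Set G) * {x} ↔ y * x⁻¹ ∈ H) := by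
        intro x y
        constructor
        · rintro ⟨h, hh, x', hx', hyx⟩
          rw [Set.mem_singleton_iff] at hx'
          have hyy : y = h * x := by rw [← hyx, hx']
          rw [hyy]
          have : h * x * x⁻¹ = h := by group
          rw [this]; exact hh
        · intro hy
          exact ⟨y * x⁻¹, hy, x, rfl, by group⟩
      have hμR : ∀ x : G, μ ((H : Set G) * {x}) = 1 := by
        intro x
        have hpre : (H : Set G) * {x} = (· * x⁻¹) ⁻¹' (H : Set G) :=
          Set.ext fun y => hRmem x y
        rw [hpre, measure_preimage_mul_right μ x⁻¹ (H : Set G), hμH]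
      have hsub2 : A g ⊆ (H : Set G) * {g} := by
        intro x hx
        by_contra hxg
        have hd : Disjoint ((H : Set G) * {x}) ((H : Set G) * {g}) := by
          rw [Set.disjoint_left]
          intro y hy1 hy2
          rw [hRmem] at hy1 hy2
          apply hxg
          rw [hRmem]
          have : x * g⁻¹ = (y * x⁻¹)⁻¹ * (y * g⁻¹) := by group
          rw [this]; exact mul_mem (inv_mem hy1) hy2
        have hx2 : (H : Set G) * {x} ⊆ A g := by
          intro y hy
          rw [hRmem] at hy
          have he : (y * x⁻¹) * x = y := by group
          exact he ▸ hstl g x hx _ hy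
        have hg2 : (H : Set G) * {g} ⊆ A g := by
          intro y hy
          rw [hRmem] at hy
          exact mem_HgH_iff.2 ⟨y * g⁻¹, hy, 1, H.one_mem, by group⟩
        have h2 : (2 : ENNReal) ≤ μ (A g) := by
          calc (2 : ENNReal) = μ ((H : Set G) * {x}) + μ ((H : Set G) * {g}) := by
                rw [hμR, hμR]; norm_num
            _ = μ ((H : Set G) * {x} ∪ (H : Set G) * {g}) :=
                (measure_union hd (hHo.mul_right).measurableSet).symm
            _ ≤ μ (A g) := measure_mono (Set.union_subset hx2 hg2)
        rw [hb] at h2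
        norm_num at h2
      -- conclude gH = Hg and the conjugation identity
      ext y
      simp only [Set.mem_image, SetLike.mem_coe]
      constructor
      · rintro ⟨h, hh, rfl⟩
        have hgh : g * h ∈ (H : Set G) * {g} := hsub2 (hgsub g ⟨h, hh, rfl⟩)
        rw [hRmem] at hgh
        exact hgh
      · intro hy
        have hyg : y * g ∈ g • (H : Set G) := by
          apply hsub1
          exact mem_HgH_iff.2 ⟨y, hy, 1, H.one_mem, by group⟩
        rw [Set.mem_smul_set_iff_inv_smul_mem] at hyg
        simp only [smul_eq_mul] at hyg
        exact ⟨g⁻¹ * (y * g), hyg, by group⟩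
    -- (c) → set identity A g = g • H
    have hcset : (fun x => g * x * g⁻¹) '' (H : Set G) = (H : Set G) →
        A g = g • (H : Set G) := by
      intro hc
      apply Set.Subset.antisymm
      · intro x hx
        obtain ⟨h₁, hh₁, h₂, hh₂, rfl⟩ := mem_HgH_iff.1 hx
        have : h₁ ∈ (fun x => g * x * g⁻¹) '' (H : Set G) := hc.symm ▸ hh₁
        obtain ⟨h, hh, hhe⟩ := this
        refine ⟨h * h₂, mul_mem hh hh₂, ?_⟩
        simp only [smul_eq_mul]
        rw [← hhe]; group
      · exact hgsub g
    have hcb : (fun x => g * x * g⁻¹) '' (H : Set G) = (H : Set G) → μ (A g) = 1 := by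
      intro hc
      rw [hcset hc, measure_smul, hμH]
    -- (a) → (b)
    have hab : (∃ f : G → ℝ, HasCompactSupport f ∧
          (∀ h ∈ H, ∀ x : G, f (h * x) = f x) ∧
          (∀ h ∈ H, ∀ x : G, f (x * h) = f x) ∧
          (∀ x : G, ∃ n : ℤ, f x = (n : ℝ)) ∧
          mconv μ ((A g).indicator fun _ => (1 : ℝ)) f =
            (H : Set G).indicator (fun _ => (1 : ℝ)) ∧
          mconv μ f ((A g).indicator fun _ => (1 : ℝ)) =
            (H : Set G).indicator (fun _ => (1 : ℝ))) → μ (A g) = 1 := by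
      rintro ⟨f, hcs, hl, hr, hz, hconv1, _⟩
      have hfc : Continuous f := by
        rw [continuous_iff_continuousAt]
        intro x
        apply Filter.EventuallyEq.continuousAt (y := f x)
        apply Filter.eventually_of_mem ((hHo.smul x).mem_nhds ⟨1, H.one_mem, by simp⟩)
        rintro y ⟨h, hh, rfl⟩
        exact hr h hh x
      have hfi : Integrable f μ := hfc.integrable_of_hasCompactSupport hcs
      obtain ⟨t, ht⟩ := hcs.elim_finite_subcover (fun a : G => a • (H : Set G))
        (fun a => hHo.smul a) (fun x _ => Set.mem_iUnion.2 ⟨x, ⟨1, H.one_mem, by simp⟩⟩)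
      obtain ⟨n, hn⟩ := integral_int μ H hHo hμH t f hfi hr hz
        (fun x hx => by
          obtain ⟨a, ha, hxa⟩ := Set.mem_iUnion₂.1 (ht (subset_tsupport f hx))
          exact Set.mem_iUnion₂.2 ⟨a, ha, hxa⟩)
      have hmain : (μ (A g)).toReal * (n : ℝ) = 1 := by
        rw [← hn, ← key_integral μ H hHo hμH (hAc g) (hst g) hfi hl, hconv1,
          integral_indicator_const _ hHo.measurableSet, measureReal_def, hμH]
        simp
      have hge : (1 : ℝ) ≤ (μ (A g)).toReal := by
        have h1 : μ (g • (H : Set G)) ≤ μ (A g) := measure_mono (hgsub g)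
        rw [measure_smul, hμH] at h1
        have := ENNReal.toReal_mono (hAc g).measure_lt_top.ne h1
        simpa using this
      have hn0 : (0 : ℝ) < (n : ℝ) := by nlinarith
      have hn1 : (1 : ℝ) ≤ (n : ℝ) := by
        exact_mod_cast (by exact_mod_cast hn0 : (0 : ℤ) < n)
      have hM : (μ (A g)).toReal = 1 := by nlinarith
      exact (ENNReal.toReal_eq_one_iff _).1 hM
    -- (b) → (a)
    have hba : μ (A g) = 1 → (∃ f : G → ℝ, HasCompactSupport f ∧
          (∀ h ∈ H, ∀ x : G, f (h * x) = f x) ∧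
          (∀ h ∈ H, ∀ x : G, f (x * h) = f x) ∧
          (∀ x : G, ∃ n : ℤ, f x = (n : ℝ)) ∧
          mconv μ ((A g).indicator fun _ => (1 : ℝ)) f =
            (H : Set G).indicator (fun _ => (1 : ℝ)) ∧
          mconv μ f ((A g).indicator fun _ => (1 : ℝ)) =
            (H : Set G).indicator (fun _ => (1 : ℝ))) := by
      intro hb
      have hc := hbc hb
      have hset : A g = g • (H : Set G) := hcset hc
      have hcin : ∀ h ∈ H, g * h * g⁻¹ ∈ H := by
        intro h hh
        have : g * h * g⁻¹ ∈ (fun x => g * x * g⁻¹) '' (H : Set G) :=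
          Set.mem_image_of_mem _ hh
        rwa [hc] at this
      have hcinv : ∀ h ∈ H, g⁻¹ * h * g ∈ H := by
        intro h hh
        have : h ∈ (fun x => g * x * g⁻¹) '' (H : Set G) := hc.symm ▸ hh
        obtain ⟨h', hh', he⟩ := this
        have : g⁻¹ * h * g = h' := by rw [← he]; group
        rw [this]; exact hh'
      -- membership criterion for the support coset
      have hmemiff : ∀ x : G, x ∈ g⁻¹ • (H : Set G) ↔ g * x ∈ H := by
        intro x
        rw [Set.mem_smul_set_iff_inv_smul_mem]
        simp [smul_eq_mul]
      refine ⟨(g⁻¹ • (H : Set G)).indicator fun _ => (1 : ℝ), ?_, ?_, ?_, ?_, ?_, ?_⟩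
      · -- compact support
        apply HasCompactSupport.intro (hHc.smul g⁻¹)
        intro x hx
        exact Set.indicator_of_notMem hx _
      · -- left invariance
        intro h hh x
        have hiff : h * x ∈ g⁻¹ • (H : Set G) ↔ x ∈ g⁻¹ • (H : Set G) := by
          rw [hmemiff, hmemiff]
          constructor
          · intro hmem
            have h1 : (g * h * g⁻¹)⁻¹ * (g * (h * x)) = g * x := by group
            rw [← h1]
            exact mul_mem (inv_mem (hcin h hh)) hmem
          · intro hmem
            have h1 : (g * h * g⁻¹) * (g * x) = g * (h * x) := by group
            rw [← h1]
            exact mul_mem (hcin h hh) hmem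
        by_cases hx : x ∈ g⁻¹ • (H : Set G)
        · rw [Set.indicator_of_mem hx, Set.indicator_of_mem (hiff.2 hx)]
        · rw [Set.indicator_of_notMem hx, Set.indicator_of_notMem (fun hcc => hx (hiff.1 hcc))]
      · -- right invariance
        intro h hh x
        have hiff : x * h ∈ g⁻¹ • (H : Set G) ↔ x ∈ g⁻¹ • (H : Set G) := by
          rw [hmemiff, hmemiff]
          constructor
          · intro hmem
            have h1 : (g * (x * h)) * h⁻¹ = g * x := by group
            rw [← h1]
            exact mul_mem hmem (inv_mem hh)
          · intro hmem
            have h1 : (g * x) * h = g * (x * h) := by group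
            rw [← h1]
            exact mul_mem hmem hh
        by_cases hx : x ∈ g⁻¹ • (H : Set G)
        · rw [Set.indicator_of_mem hx, Set.indicator_of_mem (hiff.2 hx)]
        · rw [Set.indicator_of_notMem hx, Set.indicator_of_notMem (fun hcc => hx (hiff.1 hcc))]
      · -- integer valued
        intro x
        by_cases hx : x ∈ g⁻¹ • (H : Set G)
        · exact ⟨1, by rw [Set.indicator_of_mem hx]; norm_num⟩
        · exact ⟨0, by rw [Set.indicator_of_notMem hx]; norm_num⟩
      · -- first convolution identity
        funext x
        rw [hset]
        have hlf : ∀ h ∈ H, ∀ x : G,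
            (g⁻¹ • (H : Set G)).indicator (fun _ => (1 : ℝ)) (h * x)
              = (g⁻¹ • (H : Set G)).indicator (fun _ => (1 : ℝ)) x := by
          intro h hh x
          have hiff : h * x ∈ g⁻¹ • (H : Set G) ↔ x ∈ g⁻¹ • (H : Set G) := by
            rw [hmemiff, hmemiff]
            constructor
            · intro hmem
              have h1 : (g * h * g⁻¹)⁻¹ * (g * (h * x)) = g * x := by group
              rw [← h1]
              exact mul_mem (inv_mem (hcin h hh)) hmem
            · intro hmem
              have h1 : (g * h * g⁻¹) * (g * x) = g * (h * x) := by group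
              rw [← h1]
              exact mul_mem (hcin h hh) hmem
          by_cases hx : x ∈ g⁻¹ • (H : Set G)
          · rw [Set.indicator_of_mem hx, Set.indicator_of_mem (hiff.2 hx)]
          · rw [Set.indicator_of_notMem hx,
              Set.indicator_of_notMem (fun hcc => hx (hiff.1 hcc))]
        rw [mconv_coset μ H hHo hμH g hlf x]
        by_cases hx : x ∈ (H : Set G)
        · rw [Set.indicator_of_mem hx, Set.indicator_of_mem]
          rw [hmemiff]
          simpa using hx
        · rw [Set.indicator_of_notMem hx, Set.indicator_of_notMem]
          rw [hmemiff]
          simpa using hx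
      · -- second convolution identity
        funext x
        rw [show mconv μ ((g⁻¹ • (H : Set G)).indicator fun _ => (1 : ℝ))
            ((A g).indicator fun _ => (1 : ℝ)) x
            = (A g).indicator (fun _ => (1 : ℝ)) ((g⁻¹)⁻¹ * x) from
          mconv_coset μ H hHo hμH g⁻¹ (hindl g) x]
        rw [inv_inv]
        by_cases hx : x ∈ (H : Set G)
        · rw [Set.indicator_of_mem hx, Set.indicator_of_mem]
          rw [hset]
          exact ⟨x, hx, rfl⟩
        · rw [Set.indicator_of_notMem hx, Set.indicator_of_notMem]
          rw [hset]
          intro hmem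
          obtain ⟨h, hh, he⟩ := hmem
          simp only [smul_eq_mul] at he
          exact hx (by rw [← mul_left_cancel he]; exact hh)
    exact ⟨⟨hab, hba⟩, ⟨hbc, hcb⟩⟩
end

section
/- Every F-linear endomorphism φ of L can be written uniquely in the form φ(x) = Σ_{g∈G} a_g·g(x) with coefficients a_g ∈ L; equivalently, the F-linear maps x ↦ g(x), for g ∈ G, form a basis of End_F(L) as a left L-vector space, where L acts on End_F(L) by postcomposition with multiplication. -/
/-- **Dedekind's lemma / linear independence of automorphisms**: let `L` be a field with a
faithful action of a finite group `G` by field automorphisms, and let `F = L^G` be the fixed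
field.  Every `F`-linear endomorphism `φ` of `L` can be written uniquely as
`φ(x) = Σ_{g ∈ G} a_g · g(x)` with coefficients `a_g ∈ L`; i.e. the maps `x ↦ g(x)` form a
basis of `End_F(L)` as a left `L`-vector space. -/
theorem linearMap_eq_sum_smul_automorphisms_unique {L : Type} [Field L]
    {G : Type} [Group G] [Fintype G] [MulSemiringAction G L] [FaithfulSMul G L]
    (φ : L →ₗ[FixedPoints.subfield G L] L) :
    ∃! a : G → L, ∀ x : L, φ x = ∑ g : G, a g * (g • x) := by
  classical
  let F := FixedPoints.subfield G L
  let f : G → (L →ₗ[F] L) := fun g => (MulSemiringAction.toAlgHom F L g).toLinearMap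
  have hli : LinearIndependent L f :=
    LinearIndependent.comp (linearIndependent_toLinearMap (↥F) L L)
      (MulSemiringAction.toAlgHom (↥F) L) (MulSemiringAction.toAlgHom_injective (M := G) (↥F) L)
  have hcard : Fintype.card G = Module.finrank L (L →ₗ[F] L) := by
    rw [Module.finrank_linearMap_self, FixedPoints.finrank_eq_card]
  have : Nonempty G := ⟨1⟩
  let b : Module.Basis G L (L →ₗ[F] L) := basisOfLinearIndependentOfCardEqFinrank hli hcard
  have hb : ∀ g, b g = f g := fun g => by
    rw [coe_basisOfLinearIndependentOfCardEqFinrank]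
  have key : ∀ a : G → L, (∀ x : L, φ x = ∑ g : G, a g * (g • x)) ↔
      φ = ∑ g : G, a g • b g := by
    intro a
    constructor
    · intro h
      ext x
      rw [h x]
      simp only [LinearMap.sum_apply, LinearMap.smul_apply, hb, smul_eq_mul]
      rfl
    · intro h x
      rw [h]
      simp only [LinearMap.sum_apply, LinearMap.smul_apply, hb, smul_eq_mul]
      rfl
  refine ⟨fun g => b.repr φ g, (key _).mpr ?_, fun a ha => ?_⟩
  · exact (b.sum_repr φ).symm
  · have ha' := (key a).mp ha
    funext g
    rw [ha', Module.Basis.repr_sum_self]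
end

section
/- There exist a natural number n and elements x₁,…,xₙ, y₁,…,yₙ ∈ L such that for every g ∈ G one has Σ_{i=1}^n xᵢ·g(yᵢ) = 1 if g = 1 and Σ_{i=1}^n xᵢ·g(yᵢ) = 0 if g ≠ 1; that is, L is a G-Galois extension of the fixed field F = L^G in the sense of Galois extensions of commutative rings. -/
/-- Let `L` be a field with a faithful action of a finite group `G` by field automorphisms.
Then there exist `n` and elements `x₁,…,xₙ, y₁,…,yₙ ∈ L` such that for every `g ∈ G`,
`Σᵢ xᵢ·g(yᵢ) = 1` if `g = 1` and `= 0` otherwise; that is, `L` is a `G`-Galois extension of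
the fixed field `F = L^G` in the sense of Galois extensions of commutative rings
(existence of a `G`-Galois system). -/
theorem exists_galois_system {L : Type} [Field L]
    {G : Type} [Group G] [Fintype G] [DecidableEq G]
    [MulSemiringAction G L] [FaithfulSMul G L] :
    ∃ (n : ℕ) (x y : Fin n → L), ∀ g : G,
      ∑ i : Fin n, x i * (g • y i) = if g = 1 then 1 else 0 := by
  classical
  -- the vector of "evaluations" of an element of L
  set v : L → (G → L) := fun y g => g • y with hv
  set p : Submodule L (G → L) := Submodule.span L (Set.range v) with hp
  -- the target vector
  set δ : G → L := fun g => if g = 1 then 1 else 0 with hδ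
  have hmem : δ ∈ p := by
    by_contra hx
    obtain ⟨f, hf0, hf⟩ := p.exists_dual_map_eq_bot_of_notMem hx inferInstance
    -- f vanishes on all v y
    have hker : ∀ y : L, f (v y) = 0 := by
      intro y
      have : f (v y) ∈ p.map f := Submodule.mem_map_of_mem (Submodule.subset_span ⟨y, rfl⟩)
      rw [hf] at this
      exact (Submodule.mem_bot L).1 this
    -- expand f via the standard basis
    set c : G → L := fun g => f (fun h => if g = h then 1 else 0) with hc
    have hexp : ∀ x : G → L, f x = ∑ g : G, x g * c g := by
      intro x
      rw [LinearMap.pi_apply_eq_sum_univ f x]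
      simp [c, smul_eq_mul]
    -- linear independence of the automorphisms as monoid homs
    have hinj : Function.Injective
        (fun g : G => ((MulSemiringAction.toRingHom G L g).toMonoidHom : L →* L)) := by
      intro g g' h
      refine eq_of_smul_eq_smul (α := L) fun y => ?_
      have := DFunLike.congr_fun h y
      simpa [MulSemiringAction.toRingHom_apply] using this
    have hLI : LinearIndependent L
        (fun g : G => (((MulSemiringAction.toRingHom G L g).toMonoidHom : L →* L) : L → L)) :=
      (linearIndependent_monoidHom L L).comp _ hinj
    have hzero : ∀ g : G, c g = 0 := by
      have := Fintype.linearIndependent_iff.mp hLI c ?_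
      · exact this
      · funext y
        have := hker y
        rw [hexp] at this
        simpa [v, MulSemiringAction.toRingHom_apply, Finset.sum_apply, smul_eq_mul,
          mul_comm] using this
    -- but f δ ≠ 0 gives c 1 ≠ 0
    apply hf0
    rw [hexp]
    simp [δ, hzero]
  -- extract a finite combination
  rw [hp, Finsupp.mem_span_range_iff_exists_finsupp] at hmem
  obtain ⟨cf, hcf⟩ := hmem
  set s := cf.support
  refine ⟨s.card, fun i => cf (s.equivFin.symm i), fun i => (s.equivFin.symm i : L), fun g => ?_⟩
  have h1 : ∑ i : Fin s.card, cf (s.equivFin.symm i) * (g • ((s.equivFin.symm i : L)))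
      = ∑ a ∈ s, cf a * (g • a) := by
    rw [Equiv.sum_comp s.equivFin.symm (fun a : s => cf a * (g • (a : L))),
      Finset.univ_eq_attach]
    exact Finset.sum_attach s fun a => cf a * (g • a)
  rw [h1]
  have := congr_fun hcf g
  rw [Finsupp.sum] at this
  simpa [v, δ, smul_eq_mul] using this
end
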